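/- arXiv:1907.07732 — 3 statements merged into one kernel-verified Lean document; each statement's English description precedes it below -/
import Mathlib

section
/- Let A be the N×N matrix with diagonal entries -α₁,...,-α_N (all αᵢ > 0), subdiagonal entries β₁,...,β_{N-1} (all βᵢ > 0), top-right corner entry -β_N (β_N > 0), and zeros elsewhere, where N > 2. If there exists a diagonal matrix D with positive diagonal entries such that DA + AᵀD is negative definite, then (β₁⋯β_N)/(α₁⋯α_N) < sec(π/N)^N. -/
open Matrix Real

set_option maxHeartbeats 1000000 in
theorem stmt_3 (N : ℕ) (hN : 2 < N) (α β : Fin N → ℝ)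
    (hα : ∀ i, 0 < α i) (hβ : ∀ i, 0 < β i)
    (A : Matrix (Fin N) (Fin N) ℝ)
    (hA : ∀ i j : Fin N,
      A i j = if i = j then -α i
        else if i.val = j.val + 1 then β j
        else if i.val = 0 ∧ j.val = N - 1 then -(β ⟨N - 1, by omega⟩)
        else 0)
    (hD : ∃ D : Fin N → ℝ, (∀ i, 0 < D i) ∧
      (-(Matrix.diagonal D * A + Aᵀ * Matrix.diagonal D)).PosDef) :
    (∏ i, β i) / (∏ i, α i) < (1 / Real.cos (Real.pi / N)) ^ N := by
  obtain ⟨D, hDpos, hPD⟩ := hD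
  have hNpos : 0 < N := by omega
  have hN1 : N - 1 < N := by omega
  obtain ⟨i0, hi0def⟩ : ∃ z : Fin N, z = ⟨0, hNpos⟩ := ⟨_, rfl⟩
  obtain ⟨lst, hlstdef⟩ : ∃ z : Fin N, z = ⟨N - 1, hN1⟩ := ⟨_, rfl⟩
  have hi0v : i0.val = 0 := by rw [hi0def]
  have hlstv : lst.val = N - 1 := by rw [hlstdef]
  have hA' : ∀ i j : Fin N,
      A i j = if i = j then -α i
        else if i.val = j.val + 1 then β j
        else if i.val = 0 ∧ j.val = N - 1 then -(β lst)
        else 0 := by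
    intro i j
    rw [hA i j, hlstdef]
  have hPα : 0 < ∏ i, α i := Finset.prod_pos fun i _ => hα i
  have hPβ : 0 < ∏ i, β i := Finset.prod_pos fun i _ => hβ i
  set P : ℝ := (∏ i, β i) / (∏ i, α i) with hPdef
  have hPpos : 0 < P := div_pos hPβ hPα
  set θ : ℝ := Real.pi / N with hθdef
  have hNR : (0:ℝ) < N := by exact_mod_cast hNpos
  have hθpos : 0 < θ := div_pos Real.pi_pos hNR
  have hθlt : θ < Real.pi / 2 := by
    rw [hθdef, div_lt_div_iff₀ hNR (by norm_num)]
    have h2N : (2:ℝ) < N := by exact_mod_cast hN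
    nlinarith [Real.pi_pos]
  have hcos : 0 < Real.cos θ := Real.cos_pos_of_mem_Ioo ⟨by linarith, hθlt⟩
  set r : ℝ := P ^ ((N:ℝ)⁻¹) with hrdef
  have hrpos : 0 < r := Real.rpow_pos_of_pos hPpos _
  have hrN : r ^ N = P := by
    rw [hrdef, ← Real.rpow_natCast (P ^ ((N:ℝ)⁻¹)) N, ← Real.rpow_mul hPpos.le,
      inv_mul_cancel₀ (by positivity), Real.rpow_one]
  suffices hr : r * Real.cos θ < 1 by
    have h1 : r < 1 / Real.cos θ := by rw [lt_div_iff₀ hcos]; exact hr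
    calc P = r ^ N := hrN.symm
      _ < (1 / Real.cos θ) ^ N := pow_lt_pow_left₀ h1 hrpos.le (by omega)
  -- complex eigenvalue machinery
  obtain ⟨μ, hμdef⟩ : ∃ z : ℂ, z = (r : ℂ) * Complex.exp (θ * Complex.I) := ⟨_, rfl⟩
  have hμ0 : μ ≠ 0 := by
    rw [hμdef]
    exact mul_ne_zero (by exact_mod_cast hrpos.ne') (Complex.exp_ne_zero _)
  have hN0C : (N:ℂ) ≠ 0 := by exact_mod_cast hNpos.ne'
  have hμN : μ ^ N = -(P : ℂ) := by
    rw [hμdef, mul_pow, ← Complex.exp_nat_mul]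
    have h1 : (N:ℂ) * ((θ:ℝ) * Complex.I) = (Real.pi : ℂ) * Complex.I := by
      rw [hθdef]
      push_cast
      rw [show (N:ℂ) * ((Real.pi:ℂ)/(N:ℂ) * Complex.I)
          = ((N:ℂ)/(N:ℂ)) * ((Real.pi:ℂ) * Complex.I) by ring, div_self hN0C, one_mul]
    rw [h1, Complex.exp_pi_mul_I]
    rw [← hrN]; push_cast; ring
  have hμre : μ.re = r * Real.cos θ := by
    rw [hμdef, Complex.mul_re]
    simp [Complex.exp_ofReal_mul_I_re]
  -- the eigenvector
  obtain ⟨w, hwdef⟩ : ∃ z : ℕ → ℝ,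
      z = fun j => if h : j + 1 < N then β ⟨j, by omega⟩ / α ⟨j + 1, h⟩ else 1 := ⟨_, rfl⟩
  obtain ⟨c, hcdef⟩ : ∃ z : ℕ → ℝ, z = fun k => ∏ j ∈ Finset.range k, w j := ⟨_, rfl⟩
  obtain ⟨u, hudef⟩ : ∃ z : Fin N → ℂ, z = fun i => ((c i.val : ℝ) : ℂ) / μ ^ (i.val) := ⟨_, rfl⟩
  have hc0 : c 0 = 1 := by rw [hcdef]; simp
  have hu0 : u i0 = 1 := by
    simp only [hudef, hi0v, hc0]
    simp
  -- product identity
  obtain ⟨βn, hβndef⟩ : ∃ z : ℕ → ℝ, z = fun j => if h : j < N then β ⟨j, h⟩ else 1 := ⟨_, rfl⟩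
  obtain ⟨αn, hαndef⟩ : ∃ z : ℕ → ℝ, z = fun j => if h : j < N then α ⟨j, h⟩ else 1 := ⟨_, rfl⟩
  have hβnpos : ∀ j, 0 < βn j := by
    intro j; rw [hβndef]; dsimp only; split
    · exact hβ _
    · exact one_pos
  have hαnpos : ∀ j, 0 < αn j := by
    intro j; rw [hαndef]; dsimp only; split
    · exact hα _
    · exact one_pos
  have hcw : c (N - 1) = (∏ j ∈ Finset.range (N-1), βn j) / (∏ j ∈ Finset.range (N-1), αn (j+1)) := by
    rw [hcdef]; dsimp only
    rw [← Finset.prod_div_distrib]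
    refine Finset.prod_congr rfl fun j hj => ?_
    rw [Finset.mem_range] at hj
    have hj1 : j + 1 < N := by omega
    rw [hwdef, hβndef, hαndef]; dsimp only
    rw [dif_pos hj1, dif_pos (by omega : j < N), dif_pos hj1]
  have hβtot : ∏ j ∈ Finset.range N, βn j = ∏ i, β i := by
    rw [← Fin.prod_univ_eq_prod_range]
    refine Finset.prod_congr rfl fun i _ => ?_
    rw [hβndef]; dsimp only; rw [dif_pos i.isLt]
  have hαtot : ∏ j ∈ Finset.range N, αn j = ∏ i, α i := by
    rw [← Fin.prod_univ_eq_prod_range]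
    refine Finset.prod_congr rfl fun i _ => ?_
    rw [hαndef]; dsimp only; rw [dif_pos i.isLt]
  have hsplitα : (∏ j ∈ Finset.range (N-1), αn (j+1)) * αn 0 = ∏ j ∈ Finset.range N, αn j := by
    have h := Finset.prod_range_succ' αn (N - 1)
    rw [show N - 1 + 1 = N by omega] at h
    rw [h]
  have hsplitβ : ∏ j ∈ Finset.range N, βn j = (∏ j ∈ Finset.range (N - 1), βn j) * βn (N-1) := by
    have h := Finset.prod_range_succ βn (N - 1)
    rw [show N - 1 + 1 = N by omega] at h
    rw [h]
  have hαn0 : αn 0 = α i0 := by rw [hαndef, hi0def]; dsimp only; rw [dif_pos hNpos]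
  have hβnlst : βn (N-1) = β lst := by rw [hβndef, hlstdef]; dsimp only; rw [dif_pos hN1]
  have hkey : β lst * c (N - 1) = P * α i0 := by
    have hAp : (0:ℝ) < ∏ j ∈ Finset.range (N-1), αn (j+1) :=
      Finset.prod_pos fun j _ => hαnpos _
    have hne : ((∏ j ∈ Finset.range (N-1), αn (j+1)) * αn 0) ≠ 0 :=
      (mul_pos hAp (hαnpos 0)).ne'
    rw [hcw, hPdef, ← hβtot, ← hαtot, hsplitβ, ← hsplitα, ← hβnlst, ← hαn0]
    rw [div_mul_eq_mul_div, mul_div_assoc']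
    rw [div_eq_div_iff hAp.ne' hne]
    ring
  -- row computation
  have hrow : ∀ i : Fin N, (∑ j, ((A i j : ℝ) : ℂ) * u j) = (μ - 1) * (α i : ℂ) * u i := by
    intro i
    have hiLt := i.isLt
    have hsplit : ∀ j : Fin N, ((A i j : ℝ) : ℂ) * u j =
        (if j = i then (-(α i : ℝ) : ℂ) * u i else 0)
        + (if i.val = j.val + 1 then ((β j : ℝ) : ℂ) * u j else 0)
        + (if i.val = 0 ∧ j.val = N - 1 then (-(β lst : ℝ) : ℂ) * u j else 0) := by
      intro j
      rw [hA' i j]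
      by_cases h1 : i = j
      · subst h1
        rw [if_pos rfl, if_pos rfl, if_neg (show ¬ i.val = i.val + 1 by omega),
          if_neg (show ¬ (i.val = 0 ∧ i.val = N - 1) by omega)]
        push_cast; ring
      · rw [if_neg h1, if_neg (show ¬ j = i from fun h => h1 h.symm)]
        by_cases h2 : i.val = j.val + 1
        · rw [if_pos h2, if_pos h2, if_neg (show ¬ (i.val = 0 ∧ j.val = N - 1) by omega)]
          push_cast; ring
        · rw [if_neg h2, if_neg h2]
          by_cases h3 : i.val = 0 ∧ j.val = N - 1
          · rw [if_pos h3, if_pos h3]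
            push_cast; ring
          · rw [if_neg h3, if_neg h3]
            push_cast; ring
    rw [Finset.sum_congr rfl fun j _ => hsplit j, Finset.sum_add_distrib,
      Finset.sum_add_distrib, Fintype.sum_ite_eq' i (fun _ => (-(α i : ℝ) : ℂ) * u i)]
    by_cases hi : i.val = 0
    · have hieq : i = i0 := Fin.ext (by omega)
      have hsum2 : (∑ j : Fin N, if i.val = j.val + 1 then ((β j : ℝ) : ℂ) * u j else 0) = 0 :=
        Finset.sum_eq_zero fun j _ => if_neg (by omega)
      have hsum3 : (∑ j : Fin N, if i.val = 0 ∧ j.val = N - 1 then (-(β lst : ℝ) : ℂ) * u j else 0)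
          = (-(β lst : ℝ) : ℂ) * u lst := by
        have hconv : ∀ j : Fin N,
            (if i.val = 0 ∧ j.val = N - 1 then (-(β lst : ℝ) : ℂ) * u j else 0)
            = (if j = lst then (-(β lst : ℝ) : ℂ) * u j else 0) := by
          intro j
          by_cases hj : j = lst
          · subst hj; rw [if_pos ⟨hi, hlstv⟩, if_pos rfl]
          · rw [if_neg (show ¬ (i.val = 0 ∧ j.val = N - 1) from
              fun hc => hj (Fin.ext (by omega))), if_neg hj]
        rw [Finset.sum_congr rfl fun j _ => hconv j,
          Fintype.sum_ite_eq' lst (fun j => (-(β lst : ℝ) : ℂ) * u j)]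
      have hulst : u lst = ((c (N-1) : ℝ) : ℂ) / μ ^ (N-1) := by
        simp only [hudef, hlstv]
      have hkeyC : ((β lst : ℝ) : ℂ) * ((c (N - 1) : ℝ) : ℂ)
          = ((P : ℝ) : ℂ) * ((α i0 : ℝ) : ℂ) := by exact_mod_cast hkey
      have hpow : μ ^ (N-1) * μ = μ ^ N := by
        rw [← pow_succ, show N - 1 + 1 = N by omega]
      have hcorner : (-(β lst : ℝ) : ℂ) * u lst = μ * ((α i0 : ℝ) : ℂ) := by
        rw [hulst, ← mul_div_assoc, div_eq_iff (pow_ne_zero _ hμ0)]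
        calc -((β lst : ℝ) : ℂ) * ((c (N-1) : ℝ) : ℂ)
            = -(((P : ℝ) : ℂ) * ((α i0 : ℝ) : ℂ)) := by rw [← hkeyC]; ring
          _ = ((α i0 : ℝ) : ℂ) * μ ^ N := by rw [hμN]; ring
          _ = μ * ((α i0 : ℝ) : ℂ) * μ ^ (N-1) := by rw [← hpow]; ring
      rw [hsum2, hsum3, hieq, hu0, hcorner]
      ring
    · obtain ⟨k, hk⟩ : ∃ k, i.val = k + 1 := ⟨i.val - 1, by omega⟩
      have hkN : k < N := by omega
      obtain ⟨kk, hkkdef⟩ : ∃ z : Fin N, z = ⟨k, hkN⟩ := ⟨_, rfl⟩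
      have hkkv : kk.val = k := by rw [hkkdef]
      have hsum3 : (∑ j : Fin N, if i.val = 0 ∧ j.val = N - 1 then (-(β lst : ℝ) : ℂ) * u j else 0) = 0 :=
        Finset.sum_eq_zero fun j _ => if_neg (fun hc => hi hc.1)
      have hsum2 : (∑ j : Fin N, if i.val = j.val + 1 then ((β j : ℝ) : ℂ) * u j else 0)
          = ((β kk : ℝ) : ℂ) * u kk := by
        have hconv : ∀ j : Fin N, (if i.val = j.val + 1 then ((β j : ℝ) : ℂ) * u j else 0)
            = (if j = kk then ((β j : ℝ) : ℂ) * u j else 0) := by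
          intro j
          by_cases hj : j = kk
          · have hjv : j.val = k := by rw [hj]; exact hkkv
            rw [if_pos (show i.val = j.val + 1 by omega), if_pos hj]
          · rw [if_neg (show ¬ i.val = j.val + 1 from
              fun hc => hj (Fin.ext (by omega))), if_neg hj]
        rw [Finset.sum_congr rfl fun j _ => hconv j,
          Fintype.sum_ite_eq' kk (fun j => ((β j : ℝ) : ℂ) * u j)]
      have hstep : ((β kk : ℝ) : ℂ) * u kk = μ * ((α i : ℝ) : ℂ) * u i := by
        have hui : u i = ((c (k+1) : ℝ) : ℂ) / μ ^ (k+1) := by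
          simp only [hudef, hk]
        have hukk : u kk = ((c k : ℝ) : ℂ) / μ ^ k := by
          simp only [hudef, hkkv]
        have hck : c (k+1) = c k * w k := by rw [hcdef]; exact Finset.prod_range_succ w k
        have hwk : w k = β kk / α i := by
          have hiLt' : k + 1 < N := by omega
          rw [hwdef]; dsimp only
          rw [dif_pos hiLt']
          congr 1
          · exact congrArg β (Fin.ext (show k = kk.val by omega))
          · exact congrArg α (Fin.ext (show k + 1 = i.val by omega))
        rw [hui, hukk, hck, hwk]
        have hαiC : ((α i : ℝ) : ℂ) ≠ 0 := by exact_mod_cast (hα i).ne'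
        push_cast
        rw [pow_succ]
        field_simp [hμ0, hαiC]
      rw [hsum2, hsum3, hstep]
      ring
  -- quadratic form lemmas
  have hdot : ∀ (W : Matrix (Fin N) (Fin N) ℝ) (v : Fin N → ℝ),
      dotProduct (star v) (W *ᵥ v) = ∑ i, ∑ j, v i * W i j * v j := by
    intro W v
    simp [dotProduct, Matrix.mulVec, Finset.mul_sum, mul_assoc]
  have hquadneg : ∀ v : Fin N → ℝ, v ≠ 0 →
      (∑ i, ∑ j, v i * (D i * A i j + A j i * D j) * v j) < 0 := by
    intro v hv
    have h := (Matrix.posDef_iff_dotProduct_mulVec.mp hPD).2 hv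
    rw [hdot] at h
    have h3 : (∑ i, ∑ j, v i * ((-(Matrix.diagonal D * A + Aᵀ * Matrix.diagonal D)) i j) * v j)
        = -∑ i, ∑ j, v i * (D i * A i j + A j i * D j) * v j := by
      rw [← Finset.sum_neg_distrib]
      refine Finset.sum_congr rfl fun i _ => ?_
      rw [← Finset.sum_neg_distrib]
      refine Finset.sum_congr rfl fun j _ => ?_
      simp only [Matrix.neg_apply, Matrix.add_apply, Matrix.diagonal_mul, Matrix.mul_diagonal,
        Matrix.transpose_apply]
      ring
    rw [h3] at h
    linarith
  have hquadle : ∀ v : Fin N → ℝ,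
      (∑ i, ∑ j, v i * (D i * A i j + A j i * D j) * v j) ≤ 0 := by
    intro v
    by_cases hv : v = 0
    · subst hv; simp
    · exact (hquadneg v hv).le
  -- Lyapunov computation
  obtain ⟨x, hxdef⟩ : ∃ z : Fin N → ℝ, z = fun i => (u i).re := ⟨_, rfl⟩
  obtain ⟨y, hydef⟩ : ∃ z : Fin N → ℝ, z = fun i => (u i).im := ⟨_, rfl⟩
  have hxne : x ≠ 0 := by
    intro h
    have h0 : x i0 = 0 := by rw [h]; rfl
    rw [hxdef] at h0; dsimp only at h0
    rw [hu0] at h0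
    simp at h0
  obtain ⟨S, hSdef⟩ : ∃ z : ℝ, z = ∑ i, D i * α i * Complex.normSq (u i) := ⟨_, rfl⟩
  have hSpos : 0 < S := by
    rw [hSdef]
    refine Finset.sum_pos' (fun i _ => by
      have h1 := Complex.normSq_nonneg (u i)
      have h2 := (hDpos i).le
      have h3 := (hα i).le
      positivity) ⟨i0, Finset.mem_univ _, ?_⟩
    rw [hu0]
    simp only [Complex.normSq_one]
    have h1 := hDpos i0
    have h2 := hα i0
    nlinarith
  have hT1 : (∑ i, ∑ j, (starRingEnd ℂ) (u i) * ((D i * A i j + A j i * D j : ℝ) : ℂ) * u j)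
      = ((2 * (μ.re - 1) : ℝ) : ℂ) * (S : ℂ) := by
    have hsplit2 : ∀ i j : Fin N,
        (starRingEnd ℂ) (u i) * ((D i * A i j + A j i * D j : ℝ) : ℂ) * u j
        = (D i : ℂ) * (starRingEnd ℂ) (u i) * (((A i j : ℝ):ℂ) * u j)
          + (D j : ℂ) * u j * (((A j i : ℝ):ℂ) * (starRingEnd ℂ) (u i)) := by
      intro i j; push_cast; ring
    have e1 : (∑ i, ∑ j, (starRingEnd ℂ) (u i) * ((D i * A i j + A j i * D j : ℝ) : ℂ) * u j)
        = (∑ i, ∑ j, (D i : ℂ) * (starRingEnd ℂ) (u i) * (((A i j : ℝ):ℂ) * u j))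
          + (∑ i, ∑ j, (D j : ℂ) * u j * (((A j i : ℝ):ℂ) * (starRingEnd ℂ) (u i))) := by
      rw [← Finset.sum_add_distrib]
      refine Finset.sum_congr rfl fun i _ => ?_
      rw [← Finset.sum_add_distrib]
      exact Finset.sum_congr rfl fun j _ => hsplit2 i j
    have e2 : (∑ i, ∑ j, (D i : ℂ) * (starRingEnd ℂ) (u i) * (((A i j : ℝ):ℂ) * u j))
        = ∑ i, (D i : ℂ) * (starRingEnd ℂ) (u i) * ((μ - 1) * (α i : ℂ) * u i) := by
      refine Finset.sum_congr rfl fun i _ => ?_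
      rw [← Finset.mul_sum, hrow i]
    have e3 : (∑ i, ∑ j, (D j : ℂ) * u j * (((A j i : ℝ):ℂ) * (starRingEnd ℂ) (u i)))
        = ∑ j, (D j : ℂ) * u j * (starRingEnd ℂ) ((μ - 1) * (α j : ℂ) * u j) := by
      rw [Finset.sum_comm]
      refine Finset.sum_congr rfl fun j _ => ?_
      rw [← Finset.mul_sum, ← hrow j, _root_.map_sum]
      congr 1
      refine Finset.sum_congr rfl fun i _ => ?_
      rw [_root_.map_mul, Complex.conj_ofReal]
    rw [e1, e2, e3, ← Finset.sum_add_distrib]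
    have e4 : ∀ i : Fin N,
        (D i : ℂ) * (starRingEnd ℂ) (u i) * ((μ - 1) * (α i : ℂ) * u i)
          + (D i : ℂ) * u i * (starRingEnd ℂ) ((μ - 1) * (α i : ℂ) * u i)
        = ((2 * (μ.re - 1) : ℝ) : ℂ) * ((D i * α i * Complex.normSq (u i) : ℝ) : ℂ) := by
      intro i
      have hconj : (starRingEnd ℂ) ((μ - 1) * (α i : ℂ) * u i)
          = (starRingEnd ℂ) (μ - 1) * (α i : ℂ) * (starRingEnd ℂ) (u i) := by
        rw [_root_.map_mul, _root_.map_mul, Complex.conj_ofReal]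
      have hns : (starRingEnd ℂ) (u i) * u i = (Complex.normSq (u i) : ℂ) :=
        (Complex.normSq_eq_conj_mul_self).symm
      have hadd : (μ - 1) + (starRingEnd ℂ) (μ - 1) = ((2 * (μ.re - 1) : ℝ) : ℂ) := by
        rw [Complex.add_conj]
        norm_cast
      calc (D i : ℂ) * (starRingEnd ℂ) (u i) * ((μ - 1) * (α i : ℂ) * u i)
            + (D i : ℂ) * u i * (starRingEnd ℂ) ((μ - 1) * (α i : ℂ) * u i)
          = ((μ - 1) + (starRingEnd ℂ) (μ - 1))
              * ((D i : ℂ) * (α i : ℂ) * ((starRingEnd ℂ) (u i) * u i)) := by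
            rw [hconj]; ring
        _ = ((2 * (μ.re - 1) : ℝ) : ℂ) * ((D i : ℂ) * (α i : ℂ) * (Complex.normSq (u i) : ℂ)) := by
            rw [hadd, hns]
        _ = ((2 * (μ.re - 1) : ℝ) : ℂ) * ((D i * α i * Complex.normSq (u i) : ℝ) : ℂ) := by
            push_cast; ring
    rw [Finset.sum_congr rfl fun i _ => e4 i, ← Finset.mul_sum, hSdef]
    push_cast
    ring
  have hT2 : (∑ i, ∑ j, (starRingEnd ℂ) (u i) * ((D i * A i j + A j i * D j : ℝ) : ℂ) * u j).re
      = (∑ i, ∑ j, x i * (D i * A i j + A j i * D j) * x j)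
        + (∑ i, ∑ j, y i * (D i * A i j + A j i * D j) * y j) := by
    rw [Complex.re_sum, ← Finset.sum_add_distrib]
    refine Finset.sum_congr rfl fun i _ => ?_
    rw [Complex.re_sum, ← Finset.sum_add_distrib]
    refine Finset.sum_congr rfl fun j _ => ?_
    rw [hxdef, hydef]; dsimp only
    simp only [Complex.mul_re, Complex.mul_im, Complex.conj_re, Complex.conj_im,
      Complex.ofReal_re, Complex.ofReal_im]
    ring
  have hfin : (∑ i, ∑ j, x i * (D i * A i j + A j i * D j) * x j)
        + (∑ i, ∑ j, y i * (D i * A i j + A j i * D j) * y j)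
      = 2 * (μ.re - 1) * S := by
    rw [← hT2, hT1, ← Complex.ofReal_mul, Complex.ofReal_re]
  have hneg : 2 * (μ.re - 1) * S < 0 := by
    rw [← hfin]
    have h1 := hquadneg x hxne
    have h2 := hquadle y
    linarith
  have hμre1 : μ.re < 1 := by nlinarith
  rw [hμre] at hμre1
  exact hμre1
end

section
/- Let A be the N×N cyclic matrix with diagonal entries -α₁,...,-α_N (αᵢ > 0), subdiagonal 1's, top-right entry -β_N (β_N > 0), N > 2, and zeros elsewhere. If (β_N)/(α₁⋯α_N) < 1/cos(π/N)^N, then there exists a diagonal matrix D with positive entries such that DA + AᵀD is negative definite. -/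
open Matrix Real Fin.NatCast

namespace SecantAux

/-- sign vector: `-1` at index `0`, `1` elsewhere. -/
noncomputable def eps (N : ℕ) [NeZero N] (i : Fin N) : ℝ := if i = 0 then -1 else 1

lemma eps_mul_self {N : ℕ} [NeZero N] (i : Fin N) : eps N i * eps N i = 1 := by
  unfold eps; split <;> norm_num

/-- the signed cyclic shift, as a map on vectors -/
noncomputable def Tm (N : ℕ) [NeZero N] (y : Fin N → ℝ) : Fin N → ℝ := fun i => eps N i * y (i - 1)

/-- the inverse signed cyclic shift -/
noncomputable def Tm' (N : ℕ) [NeZero N] (y : Fin N → ℝ) : Fin N → ℝ := fun i => eps N (i + 1) * y (i + 1)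

lemma Tm_Tm' {N : ℕ} [NeZero N] (y : Fin N → ℝ) : Tm N (Tm' N y) = y := by
  funext i
  show eps N i * (eps N (i - 1 + 1) * y (i - 1 + 1)) = y i
  rw [sub_add_cancel, ← mul_assoc, eps_mul_self, one_mul]

lemma Tm'_Tm {N : ℕ} [NeZero N] (y : Fin N → ℝ) : Tm' N (Tm N y) = y := by
  funext i
  show eps N (i + 1) * (eps N (i + 1) * y (i + 1 - 1)) = y i
  rw [add_sub_cancel_right, ← mul_assoc, eps_mul_self, one_mul]

lemma Tm_add {N : ℕ} [NeZero N] (u v : Fin N → ℝ) : Tm N (u + v) = Tm N u + Tm N v := by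
  funext i; show eps N i * (u (i - 1) + v (i - 1)) = _; simp [Tm]; ring

lemma Tm'_add {N : ℕ} [NeZero N] (u v : Fin N → ℝ) : Tm' N (u + v) = Tm' N u + Tm' N v := by
  funext i; show eps N (i + 1) * (u (i + 1) + v (i + 1)) = _; simp [Tm']; ring

lemma Tm_smul {N : ℕ} [NeZero N] (c : ℝ) (u : Fin N → ℝ) : Tm N (c • u) = c • Tm N u := by
  funext i; show eps N i * (c * u (i - 1)) = c * (eps N i * u (i - 1)); ring

lemma Tm'_smul {N : ℕ} [NeZero N] (c : ℝ) (u : Fin N → ℝ) : Tm' N (c • u) = c • Tm' N u := by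
  funext i; show eps N (i + 1) * (c * u (i + 1)) = c * (eps N (i + 1) * u (i + 1)); ring

lemma fin_sub_one_val {N : ℕ} [NeZero N] (i : Fin N) :
    (i - 1).val = if i = 0 then N - 1 else i.val - 1 := by
  obtain ⟨m, rfl⟩ : ∃ m, N = m + 1 := ⟨N - 1, (Nat.succ_pred_eq_of_pos (NeZero.pos N)).symm⟩
  simpa using Fin.coe_sub_one i

lemma Tm_iter {N : ℕ} [NeZero N] (y : Fin N → ℝ) :
    ∀ n ≤ N, ∀ i, (Tm N)^[n] y i = (if i.val < n then -1 else 1) * y (i - (n : Fin N)) := by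
  intro n
  induction n with
  | zero => intro _ i; simp
  | succ n ih =>
    intro hn i
    rw [Function.iterate_succ_apply']
    show eps N i * (Tm N)^[n] y (i - 1) = _
    rw [ih (by omega) (i - 1)]
    have hsub : i - 1 - (n : Fin N) = i - ((n : ℕ) + 1 : ℕ) := by
      push_cast
      abel
    rw [hsub]
    have hv := fin_sub_one_val i
    by_cases hi : i = 0
    · subst hi
      rw [if_pos rfl] at hv
      rw [if_neg (by omega : ¬ ((0 - 1 : Fin N)).val < n)]
      rw [if_pos (by simp : ((0 : Fin N)).val < n + 1)]
      simp [eps]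
    · rw [if_neg hi] at hv
      have hival : i.val ≠ 0 := fun h => hi (Fin.ext h)
      have hcond : ((i - 1 : Fin N)).val < n ↔ i.val < n + 1 := by omega
      show eps N i * ((if ((i - 1 : Fin N)).val < n then (-1:ℝ) else 1) * _) = _
      rw [eps, if_neg hi, one_mul]
      by_cases h2 : i.val < n + 1
      · rw [if_pos (hcond.mpr h2), if_pos h2]
      · rw [if_neg (fun hh => h2 (hcond.mp hh)), if_neg h2]

lemma Tm_iter_N {N : ℕ} [NeZero N] (y : Fin N → ℝ) : (Tm N)^[N] y = -y := by
  funext i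
  rw [Tm_iter y N le_rfl i, if_pos i.isLt]
  simp

lemma Tm_iter_inv {N : ℕ} [NeZero N] (y : Fin N → ℝ) (n : ℕ) :
    (Tm N)^[n] ((Tm' N)^[n] y) = y := by
  induction n with
  | zero => rfl
  | succ n ih =>
    rw [Function.iterate_succ_apply' (Tm' N), Function.iterate_succ_apply (Tm N)]
    rw [show (Tm N) ((Tm' N) ((Tm' N)^[n] y)) = (Tm' N)^[n] y from Tm_Tm' _]
    exact ih

lemma Tm'_iter_N {N : ℕ} [NeZero N] (y : Fin N → ℝ) : (Tm' N)^[N] y = -y := by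
  have h := Tm_iter_inv y N
  rw [Tm_iter_N ((Tm' N)^[N] y)] at h
  exact neg_eq_iff_eq_neg.mp h

/-- Chebyshev-type scalar recurrence -/
noncomputable def cseq (μ : ℝ) : ℕ → ℝ × ℝ
  | 0 => (2, 2 * μ)
  | n + 1 => ((cseq μ n).2, 2 * μ * (cseq μ n).2 - (cseq μ n).1)

noncomputable def cv (μ : ℝ) (n : ℕ) : ℝ := (cseq μ n).1

lemma cv_zero (μ : ℝ) : cv μ 0 = 2 := rfl
lemma cv_one (μ : ℝ) : cv μ 1 = 2 * μ := rfl
lemma cv_rec (μ : ℝ) (n : ℕ) : cv μ (n + 2) = 2 * μ * cv μ (n + 1) - cv μ n := rfl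

lemma wn_eq {N : ℕ} [NeZero N] (w : Fin N → ℝ) (μ : ℝ)
    (hw : Tm N w + Tm' N w = (2 * μ) • w) :
    ∀ n, (Tm N)^[n] w + (Tm' N)^[n] w = cv μ n • w := by
  have key : ∀ n, ((Tm N)^[n] w + (Tm' N)^[n] w = cv μ n • w) ∧
      ((Tm N)^[n + 1] w + (Tm' N)^[n + 1] w = cv μ (n + 1) • w) := by
    intro n
    induction n with
    | zero =>
      constructor
      · simp [cv_zero, two_smul]
      · simpa [cv_one] using hw
    | succ n ih =>
      refine ⟨ih.2, ?_⟩
      have iden : (Tm N)^[n + 2] w + (Tm' N)^[n + 2] w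
          = Tm N ((Tm N)^[n + 1] w + (Tm' N)^[n + 1] w)
            + Tm' N ((Tm N)^[n + 1] w + (Tm' N)^[n + 1] w)
            - ((Tm N)^[n] w + (Tm' N)^[n] w) := by
        rw [Tm_add, Tm'_add]
        rw [show (Tm N) ((Tm N)^[n+1] w) = (Tm N)^[n+2] w from
          (Function.iterate_succ_apply' (Tm N) (n+1) w).symm]
        rw [show (Tm' N) ((Tm' N)^[n+1] w) = (Tm' N)^[n+2] w from
          (Function.iterate_succ_apply' (Tm' N) (n+1) w).symm]
        rw [show (Tm' N)^[n+1] w = Tm' N ((Tm' N)^[n] w) from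
          Function.iterate_succ_apply' (Tm' N) n w]
        rw [Tm_Tm']
        rw [show (Tm N)^[n+1] w = Tm N ((Tm N)^[n] w) from
          Function.iterate_succ_apply' (Tm N) n w]
        rw [Tm'_Tm]
        abel
      rw [iden, ih.1, ih.2, Tm_smul, Tm'_smul, ← smul_add, hw, cv_rec]
      rw [smul_smul, ← sub_smul]
      congr 1
      ring
  exact fun n => (key n).1

lemma cv_eq_cos (μ : ℝ) (h1 : -1 ≤ μ) (h2 : μ ≤ 1) :
    ∀ n : ℕ, cv μ n = 2 * Real.cos (n * Real.arccos μ) := by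
  have hμ : Real.cos (Real.arccos μ) = μ := Real.cos_arccos h1 h2
  have key : ∀ n : ℕ, (cv μ n = 2 * Real.cos (n * Real.arccos μ)) ∧
      (cv μ (n + 1) = 2 * Real.cos ((n + 1 : ℕ) * Real.arccos μ)) := by
    intro n
    induction n with
    | zero => constructor <;> simp [cv_zero, cv_one, hμ]
    | succ n ih =>
      refine ⟨ih.2, ?_⟩
      set φ := Real.arccos μ
      have trig : Real.cos (((n + 2 : ℕ) : ℝ) * φ) + Real.cos ((n : ℕ) * φ)
          = 2 * Real.cos (((n + 1 : ℕ) : ℝ) * φ) * Real.cos φ := by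
        have e1 : ((n + 2 : ℕ) : ℝ) * φ = ((n + 1 : ℕ) : ℝ) * φ + φ := by push_cast; ring
        have e2 : ((n : ℕ) : ℝ) * φ = ((n + 1 : ℕ) : ℝ) * φ - φ := by push_cast; ring
        rw [e1, e2, Real.cos_add, Real.cos_sub]
        ring
      rw [cv_rec, ih.1, ih.2, ← hμ]
      linarith [trig]
  exact fun n => (key n).1

lemma cv_ge_two (μ : ℝ) (h : 1 < μ) :
    ∀ n : ℕ, 2 ≤ cv μ n ∧ cv μ n ≤ cv μ (n + 1) := by
  intro n
  induction n with
  | zero =>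
    constructor
    · simp [cv_zero]
    · rw [cv_zero, cv_one]; linarith
  | succ n ih =>
    obtain ⟨h2, hle⟩ := ih
    have h2' : 2 ≤ cv μ (n + 1) := le_trans h2 hle
    refine ⟨h2', ?_⟩
    rw [cv_rec]
    nlinarith [mul_nonneg (by linarith : (0:ℝ) ≤ μ - 1) (by linarith : (0:ℝ) ≤ cv μ (n + 1))]

lemma mu_le {N : ℕ} (hN : 0 < N) (μ : ℝ) (h : cv μ N = -2) : μ ≤ Real.cos (π / N) := by
  by_contra h'
  push_neg at h'
  have hm1 : -1 ≤ μ := le_trans (Real.neg_one_le_cos _) h'.le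
  have hNR : (0:ℝ) < N := by exact_mod_cast hN
  rcases le_or_gt μ 1 with h1 | h1
  · set φ := Real.arccos μ with hφ
    have hcosφ : Real.cos φ = μ := Real.cos_arccos hm1 h1
    have hφπ : φ < π / N := by
      by_contra hge
      push_neg at hge
      have := Real.cos_le_cos_of_nonneg_of_le_pi
        (le_of_lt (div_pos Real.pi_pos hNR)) (Real.arccos_le_pi μ) hge
      rw [hcosφ] at this
      linarith
    have hc := cv_eq_cos μ hm1 h1 N
    rw [h] at hc
    have hcos : Real.cos ((N : ℝ) * φ) = -1 := by linarith
    have h0 : 0 ≤ (N : ℝ) * φ := mul_nonneg (le_of_lt hNR) (Real.arccos_nonneg μ)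
    have hlt : (N : ℝ) * φ < π := by
      have := mul_lt_mul_of_pos_left hφπ hNR
      rwa [mul_div_cancel₀ π (ne_of_gt hNR)] at this
    have := Real.cos_lt_cos_of_nonneg_of_le_pi h0 le_rfl hlt
    rw [Real.cos_pi, hcos] at this
    linarith
  · have := (cv_ge_two μ h1 N).1
    rw [h] at this
    linarith

lemma eig_le {N : ℕ} [NeZero N] {μ : ℝ} {w : Fin N → ℝ} (hw0 : w ≠ 0)
    (hw : Tm N w + Tm' N w = (2 * μ) • w) : μ ≤ Real.cos (π / N) := by
  have hrec := wn_eq w μ hw N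
  rw [Tm_iter_N, Tm'_iter_N] at hrec
  obtain ⟨i, hi⟩ := Function.ne_iff.mp hw0
  have hival : -w i + -w i = cv μ N * w i := by
    have := congrFun hrec i
    simpa using this
  have hcv : cv μ N = -2 := by
    have : (-2) * w i = cv μ N * w i := by linarith
    exact (mul_right_cancel₀ (by simpa using hi) this).symm
  exact mu_le (NeZero.pos N) μ hcv

/-- the symmetrized signed-shift matrix -/
noncomputable def Bm (N : ℕ) [NeZero N] : Matrix (Fin N) (Fin N) ℝ := fun i j =>
  ((if i = j + 1 then eps N i else 0) + (if j = i + 1 then eps N j else 0)) / 2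

lemma Bm_herm {N : ℕ} [NeZero N] : (Bm N).IsHermitian := by
  show (Bm N)ᴴ = Bm N
  funext i j
  simp only [conjTranspose_apply, star_trivial, Bm]
  rw [add_comm]

lemma Bm_mulVec {N : ℕ} [NeZero N] (y : Fin N → ℝ) :
    Bm N *ᵥ y = (2⁻¹ : ℝ) • (Tm N y + Tm' N y) := by
  funext i
  show ∑ j, Bm N i j * y j = _
  have expand : ∀ j, Bm N i j * y j =
      (if j = i - 1 then eps N i * y j else 0) / 2 + (if j = i + 1 then eps N j * y j else 0) / 2 := by
    intro j
    unfold Bm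
    have hiff : (i = j + 1) ↔ (j = i - 1) := by
      constructor
      · intro h; rw [h]; exact (add_sub_cancel_right j 1).symm
      · intro h; rw [h]; exact (sub_add_cancel i 1).symm
    rw [if_congr hiff rfl rfl]
    split <;> split <;> ring
  rw [Finset.sum_congr rfl (fun j _ => expand j), Finset.sum_add_distrib,
    ← Finset.sum_div, ← Finset.sum_div]
  rw [Finset.sum_ite_eq' Finset.univ (i - 1) (fun j => eps N i * y j),
    Finset.sum_ite_eq' Finset.univ (i + 1) (fun j => eps N j * y j)]
  simp only [Finset.mem_univ, if_pos]
  show eps N i * y (i - 1) / 2 + eps N (i + 1) * y (i + 1) / 2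
      = 2⁻¹ * (Tm N y i + Tm' N y i)
  unfold Tm Tm'
  ring

lemma Bm_quadform {N : ℕ} [NeZero N] (y : Fin N → ℝ) :
    y ⬝ᵥ (Bm N *ᵥ y) = ∑ i, eps N i * (y i * y (i - 1)) := by
  rw [Bm_mulVec]
  have h1 : y ⬝ᵥ ((2⁻¹ : ℝ) • (Tm N y + Tm' N y))
      = 2⁻¹ * (y ⬝ᵥ Tm N y + y ⬝ᵥ Tm' N y) := by
    rw [dotProduct_smul, dotProduct_add]
    simp [smul_eq_mul]
  rw [h1]
  have h2 : y ⬝ᵥ Tm N y = ∑ i, eps N i * (y i * y (i - 1)) := by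
    unfold dotProduct Tm
    exact Finset.sum_congr rfl fun i _ => by ring
  have h3 : y ⬝ᵥ Tm' N y = ∑ i, eps N i * (y i * y (i - 1)) := by
    unfold dotProduct Tm'
    rw [Fintype.sum_equiv (Equiv.addRight (1 : Fin N))
      (fun i => y i * (eps N (i + 1) * y (i + 1)))
      (fun k => eps N k * (y k * y (k - 1)))]
    intro x
    simp only [Equiv.coe_addRight]
    rw [add_sub_cancel_right]
    ring
  rw [h2, h3]
  ring

/-- Key inequality: the quadratic form of the signed cycle is at most `cos (π/N)` times
the norm squared. -/
lemma key_ineq {N : ℕ} [NeZero N] (y : Fin N → ℝ) :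
    ∑ i, eps N i * (y i * y (i - 1)) ≤ Real.cos (π / N) * ∑ i, y i * y i := by
  set H : Matrix (Fin N) (Fin N) ℝ := Real.cos (π / N) • (1 : Matrix (Fin N) (Fin N) ℝ) - Bm N
    with hH_def
  have hH : H.IsHermitian := by
    have h1 : (Real.cos (π / N) • (1 : Matrix (Fin N) (Fin N) ℝ)).IsHermitian := by
      show _ᴴ = _
      funext i j
      simp only [conjTranspose_apply, star_trivial, Matrix.smul_apply, Matrix.one_apply,
        smul_eq_mul]
      by_cases h : i = j
      · subst h; simp
      · rw [if_neg h, if_neg (Ne.symm h)]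
    exact h1.sub Bm_herm
  have heig : ∀ i, 0 ≤ hH.eigenvalues i := by
    intro i
    have hmul := hH.mulVec_eigenvectorBasis i
    set w : Fin N → ℝ := ⇑(hH.eigenvectorBasis i) with hw_def
    have hwne : w ≠ 0 := by
      intro hcontra
      apply hH.eigenvectorBasis.orthonormal.ne_zero i
      ext j
      exact congrFun hcontra j
    have hBw : Bm N *ᵥ w = (Real.cos (π / N) - hH.eigenvalues i) • w := by
      have : H *ᵥ w = Real.cos (π / N) • w - Bm N *ᵥ w := by
        rw [hH_def, Matrix.sub_mulVec, smul_mulVec, one_mulVec]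
      rw [this] at hmul
      have := sub_eq_iff_eq_add.mp hmul
      rw [sub_smul]
      rw [this]
      abel
    have hTw : Tm N w + Tm' N w = (2 * (Real.cos (π / N) - hH.eigenvalues i)) • w := by
      have h2 : (2 : ℝ) • (Bm N *ᵥ w) = Tm N w + Tm' N w := by
        rw [Bm_mulVec, smul_smul]
        norm_num
      rw [← h2, hBw, smul_smul]
    have := eig_le hwne hTw
    linarith
  have hPSD : H.PosSemidef := by
    exact hH.posSemidef_iff_eigenvalues_nonneg.mpr fun i => heig i
  have hyq := hPSD.dotProduct_mulVec_nonneg y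
  have hstar : star y = y := funext fun i => star_trivial _
  rw [hstar] at hyq
  have hexp : y ⬝ᵥ (H *ᵥ y) = Real.cos (π / N) * (∑ i, y i * y i)
      - ∑ i, eps N i * (y i * y (i - 1)) := by
    rw [hH_def, Matrix.sub_mulVec, smul_mulVec, one_mulVec, dotProduct_sub,
      dotProduct_smul, Bm_quadform]
    simp [dotProduct, smul_eq_mul]
  rw [hexp] at hyq
  linarith

end SecantAux

open SecantAux in
theorem stmt_4 (N : ℕ) (hN : 2 < N) (α : Fin N → ℝ) (βN : ℝ)
    (hα : ∀ i, 0 < α i) (hβ : 0 < βN)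
    (A : Matrix (Fin N) (Fin N) ℝ)
    (hA : ∀ i j : Fin N,
      A i j = if i = j then -α i
        else if i.val = j.val + 1 then 1
        else if i.val = 0 ∧ j.val = N - 1 then -βN
        else 0)
    (hsec : βN / (∏ i, α i) < 1 / Real.cos (Real.pi / N) ^ N) :
    ∃ D : Fin N → ℝ, (∀ i, 0 < D i) ∧
      (-(Matrix.diagonal D * A + Aᵀ * Matrix.diagonal D)).PosDef := by
  haveI : NeZero N := ⟨by omega⟩
  have hNR : (0:ℝ) < N := by positivity
  set Pa : ℝ := ∏ i, α i with hPa
  have hPrpos : 0 < Pa := Finset.prod_pos fun i _ => hα i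
  have hcosθ : 0 < Real.cos (π / N) := by
    apply Real.cos_pos_of_mem_Ioo
    constructor
    · have : 0 < π / N := div_pos Real.pi_pos hNR
      linarith [Real.pi_pos]
    · rw [div_lt_div_iff₀ hNR (by norm_num : (0:ℝ) < 2)]
      have : (2:ℝ) < N := by exact_mod_cast hN
      nlinarith [Real.pi_pos]
  -- the gain r
  set r : ℝ := (βN / Pa) ^ ((N : ℝ)⁻¹) with hr_def
  have hr0 : 0 < r := Real.rpow_pos_of_pos (div_pos hβ hPrpos) _
  have hrN : r ^ N = βN / Pa := by
    rw [hr_def, ← Real.rpow_natCast ((βN / Pa) ^ ((N : ℝ)⁻¹)) N,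
      ← Real.rpow_mul (le_of_lt (div_pos hβ hPrpos))]
    rw [inv_mul_cancel₀ (ne_of_gt hNR), Real.rpow_one]
  have hrc : r * Real.cos (π / N) < 1 := by
    have h1 : r < 1 / Real.cos (π / N) := by
      have hlt := Real.rpow_lt_rpow (le_of_lt (div_pos hβ hPrpos)) hsec
        (by positivity : (0:ℝ) < (N : ℝ)⁻¹)
      rw [← hr_def] at hlt
      have he : (1 / Real.cos (π / N) ^ N) ^ ((N:ℝ)⁻¹) = 1 / Real.cos (π / N) := by
        rw [one_div, ← inv_pow, ← Real.rpow_natCast (Real.cos (π / N))⁻¹ N,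
          ← Real.rpow_mul (inv_nonneg.mpr hcosθ.le), mul_inv_cancel₀ (ne_of_gt hNR),
          Real.rpow_one, one_div]
      rwa [he] at hlt
    calc r * Real.cos (π / N) < (1 / Real.cos (π / N)) * Real.cos (π / N) :=
          mul_lt_mul_of_pos_right h1 hcosθ
      _ = 1 := by field_simp
  -- the scaling sequence
  set s : ℕ → ℝ := fun n => Nat.rec (motive := fun _ => ℝ) 1
    (fun m ih => r * α ((m + 1 : ℕ) : Fin N) * ih) n with hs_def
  have hs_zero : s 0 = 1 := rfl
  have hs_succ : ∀ n, s (n + 1) = r * α ((n + 1 : ℕ) : Fin N) * s n := fun n => rfl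
  have hs_pos : ∀ n, 0 < s n := by
    intro n
    induction n with
    | zero => rw [hs_zero]; norm_num
    | succ n ih => rw [hs_succ]; exact mul_pos (mul_pos hr0 (hα _)) ih
  have hs_closed : ∀ n, s n = r ^ n * ∏ j ∈ Finset.range n, α ((j + 1 : ℕ) : Fin N) := by
    intro n
    induction n with
    | zero => simp [hs_zero]
    | succ n ih =>
      rw [hs_succ, ih, Finset.prod_range_succ, pow_succ]
      ring
  -- the corner identity
  set Pr2 : ℝ := ∏ j ∈ Finset.range (N - 1), α ((j + 1 : ℕ) : Fin N) with hPr2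
  have hprodpos : 0 < Pr2 := Finset.prod_pos fun j _ => hα _
  have hcorner : βN / α 0 = r * s (N - 1) := by
    have hPrsplit : Pa = α 0 * Pr2 := by
      have h1 := Finset.prod_range_succ' (fun j => α ((j : ℕ) : Fin N)) (N - 1)
      rw [Nat.sub_add_cancel (by omega : 1 ≤ N)] at h1
      have h0 : ∏ j ∈ Finset.range N, α ((j : ℕ) : Fin N) = Pa := by
        rw [Finset.prod_range, hPa]
        exact Finset.prod_congr rfl fun i _ => by rw [Fin.cast_val_eq_self]
      rw [h0] at h1
      rw [h1, mul_comm, hPr2]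
      norm_num
    have hsN : s (N - 1) = r ^ (N - 1) * Pr2 := hs_closed (N - 1)
    have hrpow : r * r ^ (N - 1) = r ^ N := by
      rw [← pow_succ']
      congr 1
      omega
    rw [hsN]
    have hre : r * (r ^ (N - 1) * Pr2) = r ^ N * Pr2 := by
      rw [← hrpow]; ring
    rw [hre, hrN, hPrsplit]
    rw [← div_div, div_mul_cancel₀ _ (ne_of_gt hprodpos)]
  -- define D
  refine ⟨fun i => s i.val * s i.val / α i,
    fun i => div_pos (mul_pos (hs_pos _) (hs_pos _)) (hα i), ?_⟩
  set D : Fin N → ℝ := fun i => s i.val * s i.val / α i with hD_def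
  -- coefficient identities
  have hF1 : ∀ i : Fin N, D i * α i = s i.val * s i.val := fun i =>
    div_mul_cancel₀ _ (ne_of_gt (hα i))
  have hF2 : ∀ i : Fin N, D i * (if i = 0 then -βN else 1)
      = r * eps N i * (s i.val * s ((i - 1 : Fin N)).val) := by
    intro i
    by_cases hi : i = 0
    · subst hi
      rw [if_pos rfl]
      have hv : ((0 - 1 : Fin N)).val = N - 1 := by rw [fin_sub_one_val]; simp
      have h0val : ((0 : Fin N)).val = 0 := rfl
      have heps0 : eps N 0 = -1 := by unfold eps; exact if_pos rfl
      rw [hD_def, heps0]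
      simp only [h0val, hv, hs_zero]
      rw [show (1:ℝ) * 1 / α 0 * -βN = -(βN / α 0) from by ring, hcorner]
      ring
    · rw [if_neg hi]
      have hival : i.val ≠ 0 := fun h => hi (Fin.ext h)
      obtain ⟨k, hk⟩ : ∃ k, i.val = k + 1 := ⟨i.val - 1, by omega⟩
      have hv : ((i - 1 : Fin N)).val = k := by rw [fin_sub_one_val, if_neg hi]; omega
      have hαi : α ((k + 1 : ℕ) : Fin N) = α i := by
        rw [← hk, Fin.cast_val_eq_self]
      have hski : s i.val = r * α i * s k := by rw [hk, hs_succ, hαi]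
      unfold eps
      rw [if_neg hi, hD_def, hv]
      simp only
      rw [hski, div_mul_eq_mul_div, div_eq_iff (ne_of_gt (hα i))]
      ring
  -- Hermitian property
  have htrans : Aᵀ * Matrix.diagonal D = (Matrix.diagonal D * A)ᵀ := by
    rw [Matrix.transpose_mul, Matrix.diagonal_transpose]
  have hherm : (-(Matrix.diagonal D * A + Aᵀ * Matrix.diagonal D)).IsHermitian := by
    rw [htrans]
    show _ᴴ = _
    funext i j
    simp only [conjTranspose_apply, star_trivial, Matrix.neg_apply, Matrix.add_apply,
      Matrix.transpose_apply]
    ring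
  -- entrywise decomposition of A
  have h1ne0 : (1 : Fin N) ≠ 0 := by
    obtain ⟨m, hm⟩ : ∃ m, N = m + 2 := ⟨N - 2, by omega⟩
    subst hm
    simp [Fin.ext_iff]
  have hAij : ∀ i j : Fin N, A i j = (if j = i then -(α i) else 0)
      + (if j = i - 1 then (if i = 0 then -βN else 1) else 0) := by
    intro i j
    rw [hA i j]
    by_cases h1 : i = j
    · subst h1
      rw [if_pos rfl, if_pos rfl]
      have : i ≠ i - 1 := by
        intro h
        have := sub_eq_self.mp h.symm
        exact h1ne0 this
      rw [if_neg this]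
      ring
    · rw [if_neg h1, if_neg (Ne.symm h1)]
      by_cases h2 : i.val = j.val + 1
      · rw [if_pos h2]
        have hine : i ≠ 0 := by
          intro h
          rw [h] at h2
          simp at h2
        have hji : j = i - 1 := by
          have : j + 1 = i := by
            apply Fin.ext
            rw [Fin.val_add, Fin.val_one']
            have h1mod : 1 % N = 1 := Nat.mod_eq_of_lt (by omega)
            rw [h1mod]
            rw [← h2]
            exact Nat.mod_eq_of_lt i.isLt
          rw [← this]
          exact (add_sub_cancel_right j 1).symm
        rw [if_pos hji, if_neg hine]
        ring
      · rw [if_neg h2]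
        by_cases h3 : i.val = 0 ∧ j.val = N - 1
        · rw [if_pos h3]
          have hi0 : i = 0 := Fin.ext (by simpa using h3.1)
          have hji : j = i - 1 := by
            apply Fin.ext
            rw [fin_sub_one_val, if_pos hi0, h3.2]
          rw [if_pos hji, hi0, if_pos rfl]
          ring
        · rw [if_neg h3]
          have hji : j ≠ i - 1 := by
            intro h
            by_cases hi0 : i = 0
            · apply h3
              subst hi0
              constructor
              · rfl
              · rw [h, fin_sub_one_val, if_pos rfl]
            · apply h2
              have hival : i.val ≠ 0 := fun hh => hi0 (Fin.ext hh)
              have := fin_sub_one_val i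
              rw [if_neg hi0] at this
              rw [h, this]
              omega
          rw [if_neg hji]
          ring
  -- mulVec formula
  have hAx : ∀ (x : Fin N → ℝ) (i : Fin N),
      (A *ᵥ x) i = -(α i) * x i + (if i = 0 then -βN else 1) * x (i - 1) := by
    intro x i
    show ∑ j, A i j * x j = _
    have expand : ∀ j, A i j * x j = (if j = i then -(α i) * x j else 0)
        + (if j = i - 1 then (if i = 0 then -βN else 1) * x j else 0) := by
      intro j
      rw [hAij i j]
      split <;> split <;> ring
    rw [Finset.sum_congr rfl fun j _ => expand j, Finset.sum_add_distrib,
      Finset.sum_ite_eq' Finset.univ i (fun j => -(α i) * x j),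
      Finset.sum_ite_eq' Finset.univ (i - 1) (fun j => (if i = 0 then -βN else 1) * x j)]
    simp only [Finset.mem_univ, if_pos]
  refine Matrix.PosDef.of_dotProduct_mulVec_pos hherm ?_
  intro x hx
  have hstar : star x = x := funext fun i => star_trivial _
  rw [hstar]
  -- set y
  set y : Fin N → ℝ := fun i => s i.val * x i with hy_def
  have hyne : ∃ i, y i ≠ 0 := by
    obtain ⟨i, hi⟩ := Function.ne_iff.mp hx
    exact ⟨i, by
      rw [hy_def]
      simp only
      exact mul_ne_zero (ne_of_gt (hs_pos i.val)) (by simpa using hi)⟩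
  set P : ℝ := ∑ i, y i * y i with hP_def
  set Q : ℝ := ∑ i, eps N i * (y i * y (i - 1)) with hQ_def
  have hPpos : 0 < P := by
    obtain ⟨i, hi⟩ := hyne
    apply Finset.sum_pos' (fun j _ => mul_self_nonneg _)
    exact ⟨i, Finset.mem_univ i, mul_self_pos.mpr hi⟩
  have hQle : Q ≤ Real.cos (π / N) * P := key_ineq y
  -- compute the quadratic form
  have hform : x ⬝ᵥ ((-(Matrix.diagonal D * A + Aᵀ * Matrix.diagonal D)) *ᵥ x)
      = 2 * P - 2 * r * Q := by
    rw [Matrix.neg_mulVec, dotProduct_neg, Matrix.add_mulVec, dotProduct_add]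
    rw [← Matrix.mulVec_mulVec x (Matrix.diagonal D) A]
    rw [← Matrix.mulVec_mulVec x Aᵀ (Matrix.diagonal D)]
    rw [Matrix.dotProduct_mulVec x Aᵀ, Matrix.vecMul_transpose]
    have hd1 : x ⬝ᵥ (Matrix.diagonal D *ᵥ (A *ᵥ x)) = ∑ i, x i * (D i * (A *ᵥ x) i) := by
      unfold dotProduct
      exact Finset.sum_congr rfl fun i _ => by rw [Matrix.mulVec_diagonal]
    have hd2 : (A *ᵥ x) ⬝ᵥ (Matrix.diagonal D *ᵥ x) = ∑ i, (A *ᵥ x) i * (D i * x i) := by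
      unfold dotProduct
      exact Finset.sum_congr rfl fun i _ => by rw [Matrix.mulVec_diagonal]
    rw [hd1, hd2]
    have hterm : ∀ i : Fin N, x i * (D i * (A *ᵥ x) i) + (A *ᵥ x) i * (D i * x i)
        = -(2 * (y i * y i)) + 2 * r * (eps N i * (y i * y (i - 1))) := by
      intro i
      rw [hAx x i]
      have e1 := hF1 i
      have e2 := hF2 i
      rw [show y i = s i.val * x i from rfl,
        show y (i - 1) = s ((i - 1 : Fin N)).val * x (i - 1) from rfl]
      linear_combination (-2 * x i * x i) * e1 + (2 * x i * x (i - 1)) * e2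
    rw [← Finset.sum_add_distrib, Finset.sum_congr rfl fun i _ => hterm i]
    rw [Finset.sum_add_distrib]
    have ha : ∑ i : Fin N, -(2 * (y i * y i)) = -(2 * P) := by
      rw [hP_def, Finset.mul_sum, ← Finset.sum_neg_distrib]
    have hb : ∑ i : Fin N, 2 * r * (eps N i * (y i * y (i - 1))) = 2 * r * Q := by
      rw [hQ_def, Finset.mul_sum]
    rw [ha, hb]
    ring
  rw [hform]
  have h1 : r * Q ≤ r * (Real.cos (π / N) * P) := mul_le_mul_of_nonneg_left hQle (le_of_lt hr0)
  nlinarith [mul_lt_mul_of_pos_right hrc hPpos]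
end

section
/- Let N > 2, ν₁,...,ν_N > 0, and ρ > cos(π/(N+1))^{N+1} / (ν₁⋯ν_N). Then the (N+1)×(N+1) matrix A with diagonal entries -ν₁,...,-ν_N, -1, subdiagonal entries all equal to 1, entry -1/ρ in position (1, N+1), and zeros elsewhere, is Lyapunov diagonally stable: there exists a diagonal matrix D with positive entries such that DA + AᵀD is negative definite. -/
open Complex Finset Real

lemma int_small_zero {n : ℕ} {t : ℤ} (h : (n:ℤ) ∣ t) (h1 : -(n:ℤ) < t) (h2 : t < n) : t = 0 := by
  obtain ⟨c, rfl⟩ := h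
  have hn : (0:ℤ) < n := by linarith
  rcases lt_trichotomy c 0 with hc | rfl | hc
  · nlinarith
  · ring
  · nlinarith

noncomputable def Efn (n : ℕ) (t : ℤ) : ℂ := Complex.exp (((t : ℝ) * Real.pi / n : ℝ) * Complex.I)

section four
variable (n : ℕ)

lemma Efn_add (a b : ℤ) : Efn n (a + b) = Efn n a * Efn n b := by
  rw [Efn, Efn, Efn, ← Complex.exp_add]
  congr 1
  push_cast
  ring

lemma Efn_zero : Efn n 0 = 1 := by simp [Efn]

lemma Efn_re (t : ℤ) : (Efn n t).re = Real.cos ((t : ℝ) * Real.pi / n) := by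
  rw [Efn, Complex.exp_mul_I]
  simp only [Complex.add_re, Complex.mul_re, Complex.I_re, Complex.I_im,
    Complex.cos_ofReal_re, Complex.sin_ofReal_im, Complex.sin_ofReal_re]
  ring

lemma Efn_conj (t : ℤ) : (starRingEnd ℂ) (Efn n t) = Efn n (-t) := by
  rw [Efn, Efn, ← Complex.exp_conj]
  congr 1
  simp only [map_mul, Complex.conj_ofReal, Complex.conj_I]
  push_cast
  ring

lemma Efn_n (hn : 0 < n) : Efn n n = -1 := by
  rw [Efn]
  have h : (((n:ℤ) : ℝ) * Real.pi / (n:ℝ)) = Real.pi := by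
    have hn' : (n:ℝ) ≠ 0 := by positivity
    push_cast
    field_simp
  rw [h]
  exact Complex.exp_pi_mul_I

lemma Efn_two_mul_pow (s : ℤ) (j : ℕ) : Efn n (2 * j * s) = (Efn n (2 * s)) ^ j := by
  induction j with
  | zero => simp [Efn_zero]
  | succ j ih =>
    push_cast
    rw [show 2 * ((j:ℤ) + 1) * s = 2 * (j:ℤ) * s + 2 * s by ring, Efn_add, pow_succ, ← ih]

lemma Efn_mul_n (hn : 0 < n) (m : ℤ) : Efn n (2 * ((n:ℤ) * m)) = 1 := by
  rw [Efn]
  have hn' : (n:ℝ) ≠ 0 := by positivity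
  have h : (((2 * ((n:ℤ) * m) : ℤ) : ℝ) * Real.pi / n) = (m:ℝ) * (2 * Real.pi) := by
    push_cast
    field_simp
  rw [h]
  have := Complex.exp_int_mul_two_pi_mul_I m
  rw [← this]
  congr 1
  push_cast
  ring

lemma Efn_geom (hn : 0 < n) (s : ℤ) :
    (∑ j ∈ Finset.range n, Efn n ((2 * j + 1) * s)) =
      if (n:ℤ) ∣ s then (n : ℂ) * Efn n s else 0 := by
  have hsplit : ∀ j : ℕ, Efn n ((2 * (j:ℤ) + 1) * s) = (Efn n (2 * s)) ^ j * Efn n s := by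
    intro j
    rw [show (2 * (j:ℤ) + 1) * s = 2 * (j:ℤ) * s + s by ring, Efn_add, Efn_two_mul_pow]
  simp only [hsplit, ← Finset.sum_mul]
  have hn' : (n:ℂ) ≠ 0 := by exact_mod_cast hn.ne'
  have hπ : (Real.pi:ℂ) ≠ 0 := by exact_mod_cast Real.pi_ne_zero
  have hw1 : Efn n (2 * s) = 1 ↔ (n:ℤ) ∣ s := by
    rw [Efn, Complex.exp_eq_one_iff]
    constructor
    · rintro ⟨m, hm⟩
      push_cast at hm
      have hm2 : 2 * (s:ℂ) * Real.pi * Complex.I = (m:ℂ) * (2 * Real.pi * Complex.I) * n := by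
        field_simp at hm
        linear_combination (2 * (Real.pi:ℂ) * Complex.I) * hm
      have h2 : (2 * (Real.pi:ℂ) * Complex.I) ≠ 0 := by
        simp [Complex.I_ne_zero, hπ]
      have hs : (s:ℂ) = ((n * m : ℤ) : ℂ) := by
        push_cast
        apply mul_left_cancel₀ h2
        linear_combination hm2
      exact ⟨m, by exact_mod_cast hs⟩
    · rintro ⟨m, rfl⟩
      refine ⟨m, ?_⟩
      have := Efn_mul_n n hn m
      rw [Efn, Complex.exp_eq_one_iff] at this
      obtain ⟨k, hk⟩ := this
      -- instead prove directly
      push_cast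
      have hnr : (n:ℂ) ≠ 0 := hn'
      field_simp
  by_cases hdvd : (n:ℤ) ∣ s
  · rw [if_pos hdvd, hw1.mpr hdvd]
    simp
  · rw [if_neg hdvd]
    have hw : Efn n (2 * s) ≠ 1 := fun h => hdvd (hw1.mp h)
    rw [geom_sum_eq hw]
    have hpow : Efn n (2 * s) ^ n = 1 := by
      rw [← Efn_two_mul_pow, show 2 * (n:ℤ) * s = 2 * ((n:ℤ) * s) by ring, Efn_mul_n n hn]
    rw [hpow]
    simp
end four

lemma int_small_dvd2 {n : ℕ} {t : ℤ} (h : (n:ℤ) ∣ t) (h1 : -(n:ℤ) < t) (h2 : t ≤ n) :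
    t = 0 ∨ t = n := by
  by_cases hc : t = n
  · right; exact hc
  · left; exact int_small_zero h h1 (lt_of_le_of_ne h2 hc)

lemma cos_odd_le (n : ℕ) (hn : 0 < n) (j : ℕ) (hj : j < n) :
    Real.cos ((2*(j:ℝ)+1) * Real.pi / n) ≤ Real.cos (Real.pi / n) := by
  have hnr : (0:ℝ) < n := by exact_mod_cast hn
  have h0 : 0 < Real.pi / n := by positivity
  have ha : (2*(j:ℝ)+1) * Real.pi / n = (2*(j:ℝ)+1) * (Real.pi / n) := by ring
  set a := (2*(j:ℝ)+1) * Real.pi / n with hadef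
  have h1 : Real.pi / n ≤ a := by
    rw [ha]
    nlinarith [h0]
  have h2 : a ≤ 2 * Real.pi - Real.pi / n := by
    rw [ha]
    have hj' : (2*(j:ℝ)+1) ≤ 2*(n:ℝ) - 1 := by
      have : (j:ℝ) + 1 ≤ n := by exact_mod_cast hj
      linarith
    have he : (2*(n:ℝ)-1) * (Real.pi / n) = 2 * Real.pi - Real.pi / n := by
      field_simp
    nlinarith [h0]
  rcases le_or_gt a Real.pi with h | h
  · exact Real.cos_le_cos_of_nonneg_of_le_pi h0.le h h1
  · rw [← Real.cos_two_pi_sub]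
    exact Real.cos_le_cos_of_nonneg_of_le_pi h0.le (by linarith) (by linarith)

lemma cyc_cos_bound (n : ℕ) (hn : 0 < n) (y : ℕ → ℝ) :
    (∑ k ∈ Finset.range (n-1), y k * y (k+1)) - y 0 * y (n-1)
      ≤ Real.cos (Real.pi / n) * ∑ k ∈ Finset.range n, (y k)^2 := by
  classical
  set v : ℕ → ℂ := fun j => ∑ k ∈ Finset.range n, ((y k : ℂ)) * Efn n (-((2*(j:ℤ)+1) * k))
    with hv
  have hconjv : ∀ j : ℕ, (starRingEnd ℂ) (v j)
      = ∑ k ∈ Finset.range n, ((y k : ℂ)) * Efn n ((2*(j:ℤ)+1) * k) := by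
    intro j
    rw [hv]
    simp only [map_sum, map_mul, Complex.conj_ofReal, Efn_conj, neg_neg]
  have hT : ∀ j : ℕ, v j * (starRingEnd ℂ) (v j)
      = ∑ k ∈ Finset.range n, ∑ l ∈ Finset.range n,
          ((y k : ℂ) * (y l : ℂ)) * Efn n ((2*(j:ℤ)+1) * ((l:ℤ) - (k:ℤ))) := by
    intro j
    rw [hconjv, hv]
    rw [Finset.sum_mul_sum]
    refine Finset.sum_congr rfl fun k _ => Finset.sum_congr rfl fun l _ => ?_
    have e := Efn_add n (-((2*(j:ℤ)+1)*(k:ℤ))) ((2*(j:ℤ)+1)*(l:ℤ))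
    rw [show (2*(j:ℤ)+1) * ((l:ℤ)-(k:ℤ)) = (-((2*(j:ℤ)+1)*(k:ℤ))) + ((2*(j:ℤ)+1)*(l:ℤ))
      from by ring, e]
    ring
  have hsum1 : ∑ j ∈ Finset.range n, v j * (starRingEnd ℂ) (v j)
      = (n:ℂ) * ∑ k ∈ Finset.range n, ((y k : ℂ))^2 := by
    calc ∑ j ∈ Finset.range n, v j * (starRingEnd ℂ) (v j)
        = ∑ j ∈ Finset.range n, ∑ k ∈ Finset.range n, ∑ l ∈ Finset.range n,
            ((y k : ℂ) * (y l : ℂ)) * Efn n ((2*(j:ℤ)+1) * ((l:ℤ) - (k:ℤ))) :=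
          Finset.sum_congr rfl fun j _ => hT j
      _ = ∑ k ∈ Finset.range n, ∑ l ∈ Finset.range n, ((y k : ℂ) * (y l : ℂ)) *
            ∑ j ∈ Finset.range n, Efn n ((2*(j:ℤ)+1) * ((l:ℤ) - (k:ℤ))) := by
          rw [Finset.sum_comm]
          refine Finset.sum_congr rfl fun k _ => ?_
          rw [Finset.sum_comm]
          refine Finset.sum_congr rfl fun l _ => ?_
          rw [Finset.mul_sum]
      _ = ∑ k ∈ Finset.range n, ∑ l ∈ Finset.range n,
            (if l = k then (n:ℂ) * ((y k : ℂ))^2 else 0) := by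
          refine Finset.sum_congr rfl fun k hk => Finset.sum_congr rfl fun l hl => ?_
          rw [Finset.mem_range] at hk hl
          rw [Efn_geom n hn]
          by_cases h : l = k
          · subst h
            rw [sub_self, if_pos (dvd_zero _), Efn_zero, mul_one, if_pos rfl]
            ring
          · rw [if_neg, if_neg h, mul_zero]
            intro hdvd
            have := int_small_zero hdvd (by omega) (by omega)
            omega
      _ = ∑ k ∈ Finset.range n, (n:ℂ) * ((y k : ℂ))^2 := by
          refine Finset.sum_congr rfl fun k hk => ?_
          rw [Finset.sum_ite_eq' (Finset.range n) k, if_pos hk]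
      _ = (n:ℂ) * ∑ k ∈ Finset.range n, ((y k : ℂ))^2 := by rw [Finset.mul_sum]
  have hsum2 : ∑ j ∈ Finset.range n, Efn n (2*(j:ℤ)+1) * (v j * (starRingEnd ℂ) (v j))
      = (n:ℂ) * ((∑ k ∈ Finset.range (n-1), ((y (k+1) : ℂ)) * (y k : ℂ)) -
          (y 0 : ℂ) * (y (n-1) : ℂ)) := by
    calc ∑ j ∈ Finset.range n, Efn n (2*(j:ℤ)+1) * (v j * (starRingEnd ℂ) (v j))
        = ∑ j ∈ Finset.range n, ∑ k ∈ Finset.range n, ∑ l ∈ Finset.range n,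
            ((y k : ℂ) * (y l : ℂ)) * Efn n ((2*(j:ℤ)+1) * ((l:ℤ) - (k:ℤ) + 1)) := by
          refine Finset.sum_congr rfl fun j _ => ?_
          rw [hT j, Finset.mul_sum]
          refine Finset.sum_congr rfl fun k _ => ?_
          rw [Finset.mul_sum]
          refine Finset.sum_congr rfl fun l _ => ?_
          have e := Efn_add n (2*(j:ℤ)+1) ((2*(j:ℤ)+1) * ((l:ℤ)-(k:ℤ)))
          rw [show (2*(j:ℤ)+1) * ((l:ℤ)-(k:ℤ)+1)
              = (2*(j:ℤ)+1) + (2*(j:ℤ)+1) * ((l:ℤ)-(k:ℤ)) from by ring, e]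
          ring
      _ = ∑ k ∈ Finset.range n, ∑ l ∈ Finset.range n, ((y k : ℂ) * (y l : ℂ)) *
            ∑ j ∈ Finset.range n, Efn n ((2*(j:ℤ)+1) * ((l:ℤ) - (k:ℤ) + 1)) := by
          rw [Finset.sum_comm]
          refine Finset.sum_congr rfl fun k _ => ?_
          rw [Finset.sum_comm]
          refine Finset.sum_congr rfl fun l _ => ?_
          rw [Finset.mul_sum]
      _ = ∑ k ∈ Finset.range n, ∑ l ∈ Finset.range n,
            ((if k = l + 1 then (n:ℂ) * ((y k : ℂ) * (y l : ℂ)) else 0) +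
             (if l = n - 1 then (if k = 0 then -((n:ℂ) * ((y k : ℂ) * (y l : ℂ))) else 0)
              else 0)) := by
          refine Finset.sum_congr rfl fun k hk => Finset.sum_congr rfl fun l hl => ?_
          rw [Finset.mem_range] at hk hl
          rw [Efn_geom n hn]
          by_cases h1 : k = l + 1
          · have ht : (l:ℤ) - (k:ℤ) + 1 = 0 := by omega
            rw [ht, if_pos (dvd_zero _), Efn_zero, mul_one, if_pos h1]
            have hz : (if l = n - 1 then (if k = 0 then -((n:ℂ) * ((y k : ℂ) * (y l : ℂ)))
                else 0) else 0) = 0 := by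
              have hk0 : ¬ (k = 0) := by omega
              split_ifs <;> simp [hk0] <;> tauto
            rw [hz, add_zero]
            ring
          · by_cases h2 : k = 0 ∧ l = n - 1
            · obtain ⟨hk0, hl0⟩ := h2
              have ht : (l:ℤ) - (k:ℤ) + 1 = (n:ℤ) := by omega
              rw [ht, if_pos (dvd_refl _), Efn_n n hn, if_neg h1, if_pos hl0, if_pos hk0,
                zero_add]
              ring
            · have hnd : ¬ ((n:ℤ) ∣ ((l:ℤ) - (k:ℤ) + 1)) := by
                intro hd
                rcases int_small_dvd2 hd (by omega) (by omega) with h0 | hN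
                · omega
                · omega
              rw [if_neg hnd, mul_zero, if_neg h1, zero_add]
              have hz : (if l = n - 1 then (if k = 0 then -((n:ℂ) * ((y k : ℂ) * (y l : ℂ)))
                  else 0) else 0) = 0 := by
                split_ifs with h3 h4
                · exact absurd ⟨h4, h3⟩ h2
                · rfl
                · rfl
              rw [hz]
      _ = (n:ℂ) * ((∑ k ∈ Finset.range (n-1), ((y (k+1) : ℂ)) * (y k : ℂ)) -
          (y 0 : ℂ) * (y (n-1) : ℂ)) := by
          simp only [Finset.sum_add_distrib]
          have hA : ∑ k ∈ Finset.range n, ∑ l ∈ Finset.range n,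
              (if k = l + 1 then (n:ℂ) * ((y k : ℂ) * (y l : ℂ)) else 0)
              = ∑ l ∈ Finset.range (n-1), (n:ℂ) * ((y (l+1) : ℂ) * (y l : ℂ)) := by
            rw [Finset.sum_comm]
            have h1 : ∀ l, ∑ k ∈ Finset.range n,
                (if k = l + 1 then (n:ℂ) * ((y k : ℂ) * (y l : ℂ)) else 0)
                = if l + 1 ∈ Finset.range n then (n:ℂ) * ((y (l+1) : ℂ) * (y l : ℂ)) else 0 :=
              fun l => Finset.sum_ite_eq' (Finset.range n) (l+1) _
            simp only [h1]
            have hrn : Finset.range n = Finset.range ((n-1)+1) := by congr 1; omega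
            rw [hrn, Finset.sum_range_succ, if_neg (by simp)]
            rw [add_zero]
            refine Finset.sum_congr rfl fun l hl => ?_
            rw [Finset.mem_range] at hl
            rw [if_pos (by rw [Finset.mem_range]; omega)]
          have hB : ∑ k ∈ Finset.range n, ∑ l ∈ Finset.range n,
              (if l = n - 1 then (if k = 0 then -((n:ℂ) * ((y k : ℂ) * (y l : ℂ))) else 0)
                else 0)
              = -((n:ℂ) * ((y 0 : ℂ) * (y (n-1) : ℂ))) := by
            have h1 : ∀ k, ∑ l ∈ Finset.range n,
                (if l = n - 1 then (if k = 0 then -((n:ℂ) * ((y k : ℂ) * (y l : ℂ))) else 0)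
                  else 0)
                = if k = 0 then -((n:ℂ) * ((y k : ℂ) * (y (n-1) : ℂ))) else 0 := by
              intro k
              rw [Finset.sum_ite_eq' (Finset.range n) (n-1), if_pos (by rw [Finset.mem_range]; omega)]
            simp only [h1]
            rw [Finset.sum_ite_eq' (Finset.range n) 0, if_pos (by rw [Finset.mem_range]; omega)]
          rw [hA, hB, mul_sub, Finset.mul_sum]
          ring
  have hvsq : ∀ j : ℕ, v j * (starRingEnd ℂ) (v j) = ((Complex.normSq (v j) : ℝ) : ℂ) :=
    fun j => Complex.mul_conj (v j)
  have hR1 : ∑ j ∈ Finset.range n, Complex.normSq (v j)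
      = n * ∑ k ∈ Finset.range n, (y k)^2 := by
    have h := hsum1
    simp only [hvsq] at h
    exact_mod_cast h
  have hR2 : ∑ j ∈ Finset.range n, Real.cos (((2*(j:ℤ)+1 : ℤ):ℝ) * Real.pi / n)
        * Complex.normSq (v j)
      = n * ((∑ k ∈ Finset.range (n-1), y (k+1) * y k) - y 0 * y (n-1)) := by
    have h := hsum2
    simp only [hvsq] at h
    have hcast : (n:ℂ) * ((∑ k ∈ Finset.range (n-1), ((y (k+1) : ℂ)) * (y k : ℂ)) -
          (y 0 : ℂ) * (y (n-1) : ℂ))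
        = (((n : ℝ) * ((∑ k ∈ Finset.range (n-1), y (k+1) * y k) - y 0 * y (n-1)) : ℝ) : ℂ) := by
      push_cast
      ring
    rw [hcast] at h
    have h2 := congrArg Complex.re h
    rw [Complex.re_sum, Complex.ofReal_re] at h2
    rw [← h2]
    refine Finset.sum_congr rfl fun j _ => ?_
    rw [show Efn n (2*(j:ℤ)+1) * ((Complex.normSq (v j) : ℝ) : ℂ)
        = ((Complex.normSq (v j) : ℝ) : ℂ) * Efn n (2*(j:ℤ)+1) from by ring]
    rw [Complex.re_ofReal_mul, Efn_re]
    ring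
  have hb : ∀ j ∈ Finset.range n, Real.cos (((2*(j:ℤ)+1 : ℤ):ℝ) * Real.pi / n)
        * Complex.normSq (v j)
      ≤ Real.cos (Real.pi / n) * Complex.normSq (v j) := by
    intro j hj
    rw [Finset.mem_range] at hj
    refine mul_le_mul_of_nonneg_right ?_ (Complex.normSq_nonneg _)
    have := cos_odd_le n hn j hj
    convert this using 3
    · rfl
    push_cast
    ring
  have hineq := Finset.sum_le_sum hb
  rw [hR2, ← Finset.mul_sum, hR1] at hineq
  have hnr : (0:ℝ) < n := by exact_mod_cast hn
  have hfin : (∑ k ∈ Finset.range (n-1), y (k+1) * y k) - y 0 * y (n-1)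
      ≤ Real.cos (Real.pi / n) * ∑ k ∈ Finset.range n, (y k)^2 := by
    have h3 : (n:ℝ) * ((∑ k ∈ Finset.range (n-1), y (k+1) * y k) - y 0 * y (n-1))
        ≤ (n:ℝ) * (Real.cos (Real.pi / n) * ∑ k ∈ Finset.range n, (y k)^2) := by
      linarith [hineq]
    exact le_of_mul_le_mul_left h3 hnr
  have hc : ∑ k ∈ Finset.range (n-1), y k * y (k+1)
      = ∑ k ∈ Finset.range (n-1), y (k+1) * y k :=
    Finset.sum_congr rfl fun k _ => mul_comm _ _
  rw [hc]
  exact hfin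

lemma quad_expand (n : ℕ) (hn : 3 < n) (g h : ℕ → ℝ) (cR : ℝ) (x : ℕ → ℝ)
    (m : ℕ → ℕ → ℝ)
    (hm : ∀ i j, m i j = if i = j then g i else if i = j + 1 then -h i else
      if j = i + 1 then -h j else if i = 0 ∧ j = n-1 then cR else
      if j = 0 ∧ i = n-1 then cR else 0) :
    ∑ i ∈ Finset.range n, ∑ j ∈ Finset.range n, m i j * (x i * x j)
      = (∑ k ∈ Finset.range n, g k * (x k)^2)
        - 2 * (∑ k ∈ Finset.range (n-1), h (k+1) * (x k * x (k+1)))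
        + 2 * cR * (x 0 * x (n-1)) := by
  have hsplit : ∀ i ∈ Finset.range n, ∀ j ∈ Finset.range n, m i j * (x i * x j) =
      (if i = j then g i * (x i * x j) else 0)
      + (if i = j + 1 then -(h i * (x i * x j)) else 0)
      + (if j = i + 1 then -(h j * (x i * x j)) else 0)
      + (if j = n-1 then (if i = 0 then cR * (x i * x j) else 0) else 0)
      + (if j = 0 then (if i = n-1 then cR * (x i * x j) else 0) else 0) := by
    intro i hi j hj
    rw [Finset.mem_range] at hi hj
    rw [hm]
    split_ifs <;> first | omega | ring
  rw [Finset.sum_congr rfl fun i hi => Finset.sum_congr rfl fun j hj => hsplit i hi j hj]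
  simp only [Finset.sum_add_distrib]
  have S1 : ∑ i ∈ Finset.range n, ∑ j ∈ Finset.range n,
      (if i = j then g i * (x i * x j) else 0) = ∑ k ∈ Finset.range n, g k * (x k)^2 := by
    refine Finset.sum_congr rfl fun i hi => ?_
    rw [Finset.sum_ite_eq (Finset.range n) i, if_pos hi]
    ring
  have S2 : ∑ i ∈ Finset.range n, ∑ j ∈ Finset.range n,
      (if i = j + 1 then -(h i * (x i * x j)) else 0)
      = -∑ k ∈ Finset.range (n-1), h (k+1) * (x k * x (k+1)) := by
    rw [Finset.sum_comm]
    have h1 : ∀ j, ∑ i ∈ Finset.range n, (if i = j + 1 then -(h i * (x i * x j)) else 0)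
        = if j + 1 ∈ Finset.range n then -(h (j+1) * (x (j+1) * x j)) else 0 :=
      fun j => Finset.sum_ite_eq' (Finset.range n) (j+1) _
    simp only [h1]
    have hrn : Finset.range n = Finset.range ((n-1)+1) := by congr 1; omega
    rw [hrn, Finset.sum_range_succ, if_neg (by simp), add_zero, ← Finset.sum_neg_distrib]
    refine Finset.sum_congr rfl fun j hj => ?_
    rw [Finset.mem_range] at hj
    rw [if_pos (by rw [Finset.mem_range]; omega)]
    ring
  have S3 : ∑ i ∈ Finset.range n, ∑ j ∈ Finset.range n,
      (if j = i + 1 then -(h j * (x i * x j)) else 0)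
      = -∑ k ∈ Finset.range (n-1), h (k+1) * (x k * x (k+1)) := by
    have h1 : ∀ i, ∑ j ∈ Finset.range n, (if j = i + 1 then -(h j * (x i * x j)) else 0)
        = if i + 1 ∈ Finset.range n then -(h (i+1) * (x i * x (i+1))) else 0 :=
      fun i => Finset.sum_ite_eq' (Finset.range n) (i+1) _
    simp only [h1]
    have hrn : Finset.range n = Finset.range ((n-1)+1) := by congr 1; omega
    rw [hrn, Finset.sum_range_succ, if_neg (by simp), add_zero, ← Finset.sum_neg_distrib]
    refine Finset.sum_congr rfl fun j hj => ?_
    rw [Finset.mem_range] at hj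
    rw [if_pos (by rw [Finset.mem_range]; omega)]
  have S4 : ∑ i ∈ Finset.range n, ∑ j ∈ Finset.range n,
      (if j = n-1 then (if i = 0 then cR * (x i * x j) else 0) else 0)
      = cR * (x 0 * x (n-1)) := by
    have h1 : ∀ i, ∑ j ∈ Finset.range n,
        (if j = n-1 then (if i = 0 then cR * (x i * x j) else 0) else 0)
        = if i = 0 then cR * (x i * x (n-1)) else 0 := by
      intro i
      rw [Finset.sum_ite_eq' (Finset.range n) (n-1), if_pos (by rw [Finset.mem_range]; omega)]
    simp only [h1]
    rw [Finset.sum_ite_eq' (Finset.range n) 0, if_pos (by rw [Finset.mem_range]; omega)]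
  have S5 : ∑ i ∈ Finset.range n, ∑ j ∈ Finset.range n,
      (if j = 0 then (if i = n-1 then cR * (x i * x j) else 0) else 0)
      = cR * (x 0 * x (n-1)) := by
    have h1 : ∀ i, ∑ j ∈ Finset.range n,
        (if j = 0 then (if i = n-1 then cR * (x i * x j) else 0) else 0)
        = if i = n-1 then cR * (x i * x 0) else 0 := by
      intro i
      rw [Finset.sum_ite_eq' (Finset.range n) 0, if_pos (by rw [Finset.mem_range]; omega)]
    simp only [h1]
    rw [Finset.sum_ite_eq' (Finset.range n) (n-1), if_pos (by rw [Finset.mem_range]; omega)]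
    ring
  rw [S1, S2, S3, S4, S5]
  ring

open Matrix Real

theorem stmt_5 (N : ℕ) (hN : 2 < N) (ν : Fin N → ℝ) (hν : ∀ i, 0 < ν i)
    (ρ : ℝ) (hρ : Real.cos (Real.pi / (N + 1)) ^ (N + 1) / (∏ i, ν i) < ρ)
    (A : Matrix (Fin (N + 1)) (Fin (N + 1)) ℝ)
    (hA : ∀ i j : Fin (N + 1),
      A i j = if h : i = j then (if hi : i.val < N then -ν ⟨i.val, hi⟩ else -1)
        else if i.val = j.val + 1 then 1
        else if i.val = 0 ∧ j.val = N then -(1 / ρ)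
        else 0) :
    ∃ D : Fin (N + 1) → ℝ, (∀ i, 0 < D i) ∧
      (-(Matrix.diagonal D * A + Aᵀ * Matrix.diagonal D)).PosDef := by
  classical
  have hP : 0 < ∏ i, ν i := Finset.prod_pos fun i _ => hν i
  set P := ∏ i, ν i with hPdef
  have hNr : (0:ℝ) < (N:ℝ) + 1 := by positivity
  have hcospos : 0 < Real.cos (Real.pi / (N + 1)) := by
    apply Real.cos_pos_of_mem_Ioo
    constructor
    · have := Real.pi_pos
      have : 0 < Real.pi / ((N:ℝ)+1) := by positivity
      linarith [Real.pi_pos]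
    · have h2 : (2:ℝ) < (N:ℝ) + 1 := by
        have : (2:ℝ) < (N:ℝ) := by exact_mod_cast hN
        linarith
      exact div_lt_div_of_pos_left Real.pi_pos (by norm_num) h2
  have hρpos : 0 < ρ := lt_trans (by positivity) hρ
  have hρP : 0 < ρ * P := mul_pos hρpos hP
  set q : ℝ := (ρ * P) ^ (((N:ℝ)+1)⁻¹) with hqdef
  have hq : 0 < q := Real.rpow_pos_of_pos hρP _
  have hqn : q ^ (N+1) = ρ * P := by
    rw [hqdef, ← Real.rpow_natCast ((ρ * P) ^ (((N:ℝ)+1)⁻¹)) (N+1),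
      ← Real.rpow_mul hρP.le]
    have : (((N:ℝ)+1)⁻¹ * ((N+1 : ℕ) : ℝ)) = 1 := by
      push_cast
      field_simp
    rw [this, Real.rpow_one]
  set c : ℝ := q⁻¹ with hcdef
  have hc : 0 < c := by positivity
  have hcn : c ^ (N+1) = (ρ * P)⁻¹ := by
    rw [hcdef, inv_pow, hqn]
  have hccos : c * Real.cos (Real.pi / (N + 1)) < 1 := by
    have h1 : (c * Real.cos (Real.pi / (N + 1))) ^ (N+1) < 1 := by
      rw [mul_pow, hcn]
      rw [inv_mul_eq_div, div_lt_one hρP]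
      rw [div_lt_iff₀ hP] at hρ
      push_cast at hρ ⊢
      linarith
    exact (pow_lt_one_iff_of_nonneg (by positivity) (Nat.succ_ne_zero N)).mp h1
  -- the weights
  set μ : ℕ → ℝ := fun k => if h : k < N then ν ⟨k, h⟩ else 1 with hμdef
  have hμpos : ∀ k, 0 < μ k := by
    intro k
    rw [hμdef]
    dsimp only
    split_ifs
    · exact hν _
    · exact one_pos
  set d : ℕ → ℝ := fun k => Nat.rec (1:ℝ) (fun k dk => c^2 * μ k * μ (k+1) * dk) k with hddef
  have hd0 : d 0 = 1 := rfl
  have hdsucc : ∀ k, d (k+1) = c^2 * μ k * μ (k+1) * d k := fun k => rfl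
  have hdpos : ∀ k, 0 < d k := by
    intro k
    induction k with
    | zero => rw [hd0]; exact one_pos
    | succ k ih =>
      rw [hdsucc]
      have := hμpos k
      have := hμpos (k+1)
      positivity
  have hdform : ∀ k, μ 0 * d k = c^(2*k) * (∏ i ∈ Finset.range k, μ i)^2 * μ k := by
    intro k
    induction k with
    | zero => simp [hd0]
    | succ k ih =>
      rw [hdsucc, Finset.prod_range_succ]
      have : μ 0 * (c ^ 2 * μ k * μ (k + 1) * d k)
          = (c ^ 2 * μ k * μ (k + 1)) * (μ 0 * d k) := by ring
      rw [this, ih, pow_succ, pow_succ]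
      ring
  have hprodμ : ∏ i ∈ Finset.range N, μ i = P := by
    rw [hPdef, ← Fin.prod_univ_eq_prod_range]
    refine Finset.prod_congr rfl fun i _ => ?_
    rw [hμdef]
    dsimp only
    rw [dif_pos i.isLt]
  have hμN : μ N = 1 := by rw [hμdef]; dsimp only; rw [dif_neg (lt_irrefl N)]
  have hdN : μ 0 * d N = c^(2*N) * P^2 := by
    rw [hdform N, hprodμ, hμN, mul_one]
  -- the matrix entries
  set D : Fin (N+1) → ℝ := fun i => d i.val with hDdef
  set m : ℕ → ℕ → ℝ := fun i j => if i = j then 2 * d i * μ i else if i = j + 1 then -(d i)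
    else if j = i + 1 then -(d j) else if i = 0 ∧ j = N then d 0 / ρ
    else if j = 0 ∧ i = N then d 0 / ρ else 0 with hmdef
  set M : Matrix (Fin (N+1)) (Fin (N+1)) ℝ := -(Matrix.diagonal D * A + Aᵀ * Matrix.diagonal D)
    with hMdef
  have hMe : ∀ i j : Fin (N+1), M i j = m i.val j.val := by
    intro i j
    have hiv := i.isLt
    have hjv := j.isLt
    have hMij : M i j = -(D i * A i j + A j i * D j) := by
      rw [hMdef]
      simp [Matrix.diagonal_mul, Matrix.mul_diagonal, Matrix.transpose_apply]
    by_cases h1 : (i:ℕ) = (j:ℕ)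
    · have hij : i = j := Fin.ext h1
      subst hij
      have hAii : A i i = -(μ i.val) := by
        rw [hA, dif_pos rfl, hμdef]
        dsimp only
        split_ifs
        · rfl
        · norm_num
      rw [hMij, hAii, hmdef]
      dsimp only
      rw [if_pos rfl, hDdef]
      ring
    · have hfne : i ≠ j := fun h => h1 (congrArg Fin.val h)
      have hfne' : j ≠ i := fun h => h1 (congrArg Fin.val h).symm
      by_cases h2 : (i:ℕ) = (j:ℕ) + 1
      · have hAij : A i j = 1 := by
          rw [hA, dif_neg hfne, if_pos h2]
        have hAji : A j i = 0 := by
          rw [hA, dif_neg hfne', if_neg (by omega), if_neg (by omega)]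
        rw [hMij, hAij, hAji, hmdef]
        dsimp only
        rw [if_neg h1, if_pos h2, hDdef]
        ring
      · by_cases h3 : (j:ℕ) = (i:ℕ) + 1
        · have hAij : A i j = 0 := by
            rw [hA, dif_neg hfne, if_neg h2, if_neg (by omega)]
          have hAji : A j i = 1 := by
            rw [hA, dif_neg hfne', if_pos h3]
          rw [hMij, hAij, hAji, hmdef]
          dsimp only
          rw [if_neg h1, if_neg h2, if_pos h3, hDdef]
          ring
        · by_cases h4 : (i:ℕ) = 0 ∧ (j:ℕ) = N
          · have hAij : A i j = -(1/ρ) := by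
              rw [hA, dif_neg hfne, if_neg h2, if_pos h4]
            have hAji : A j i = 0 := by
              rw [hA, dif_neg hfne', if_neg (by omega), if_neg (by omega)]
            rw [hMij, hAij, hAji, hmdef]
            dsimp only
            rw [if_neg h1, if_neg h2, if_neg h3, if_pos h4, hDdef]
            dsimp only
            rw [h4.1]
            ring
          · by_cases h5 : (j:ℕ) = 0 ∧ (i:ℕ) = N
            · have hAij : A i j = 0 := by
                rw [hA, dif_neg hfne, if_neg h2, if_neg (by omega)]
              have hAji : A j i = -(1/ρ) := by
                rw [hA, dif_neg hfne', if_neg (by omega), if_pos ⟨h5.1, h5.2⟩]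
              rw [hMij, hAij, hAji, hmdef]
              dsimp only
              rw [if_neg h1, if_neg h2, if_neg h3, if_neg h4, if_pos h5, hDdef]
              dsimp only
              rw [h5.1]
              ring
            · have hAij : A i j = 0 := by
                rw [hA, dif_neg hfne, if_neg h2, if_neg (by omega)]
              have hAji : A j i = 0 := by
                rw [hA, dif_neg hfne', if_neg (by omega), if_neg (by omega)]
              rw [hMij, hAij, hAji, hmdef]
              dsimp only
              rw [if_neg h1, if_neg h2, if_neg h3, if_neg h4, if_neg h5]
              ring
  refine ⟨D, fun i => hdpos _, ?_⟩
  have hmsym : ∀ a b : ℕ, m a b = m b a := by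
    intro a b
    rcases eq_or_ne a b with rfl | hab
    · rfl
    · rw [hmdef]
      dsimp only
      rw [if_neg hab, if_neg (Ne.symm hab)]
      split_ifs <;> first | omega | ring
  rw [Matrix.posDef_iff_dotProduct_mulVec]
  constructor
  · -- Hermitian
    rw [← hMdef]
    show Mᴴ = M
    rw [Matrix.conjTranspose_eq_transpose_of_trivial]
    ext i j
    rw [Matrix.transpose_apply, hMe, hMe]
    exact hmsym _ _
  · -- positivity
    intro x hx
    rw [← hMdef]
    have hstar : star x = x := rfl
    rw [hstar]
    set X : ℕ → ℝ := fun k => if h : k < N+1 then x ⟨k, h⟩ else 0 with hXdef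
    have hXx : ∀ i : Fin (N+1), x i = X i.val := by
      intro i
      rw [hXdef]
      dsimp only
      rw [dif_pos i.isLt]
    have hquad : dotProduct x (M *ᵥ x)
        = ∑ i ∈ Finset.range (N+1), ∑ j ∈ Finset.range (N+1), m i j * (X i * X j) := by
      rw [dotProduct, ← Fin.sum_univ_eq_sum_range
        (fun i => ∑ j ∈ Finset.range (N+1), m i j * (X i * X j)) (N+1)]
      refine Finset.sum_congr rfl fun i _ => ?_
      rw [Matrix.mulVec, dotProduct, Finset.mul_sum,
        ← Fin.sum_univ_eq_sum_range (fun j => m i.val j * (X i.val * X j)) (N+1)]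
      refine Finset.sum_congr rfl fun j _ => ?_
      rw [hMe, hXx i, hXx j]
      ring
    rw [hquad]
    rw [quad_expand (N+1) (by omega) (fun k => 2 * d k * μ k) d (d 0 / ρ) X m
      (by intro i j; rw [hmdef]; simp only [Nat.add_sub_cancel])]
    simp only [Nat.add_sub_cancel]
    -- substitution y k = sqrt (d k * μ k) * X k
    set y : ℕ → ℝ := fun k => Real.sqrt (d k * μ k) * X k with hydef
    have hy2 : ∀ k, 2 * d k * μ k * (X k)^2 = 2 * (y k)^2 := by
      intro k
      rw [hydef]
      dsimp only
      rw [mul_pow, Real.sq_sqrt (mul_pos (hdpos k) (hμpos k)).le]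
      ring
    have hsqrtprod : ∀ a b : ℝ, 0 ≤ a → 0 ≤ b → Real.sqrt a * Real.sqrt b = Real.sqrt (a*b) :=
      fun a b ha hb => (Real.sqrt_mul ha b).symm
    have hcross : ∀ k, d (k+1) * (X k * X (k+1)) = c * (y k * y (k+1)) := by
      intro k
      rw [hydef]
      dsimp only
      have h1 : Real.sqrt (d k * μ k) * X k * (Real.sqrt (d (k+1) * μ (k+1)) * X (k+1))
          = (Real.sqrt (d k * μ k) * Real.sqrt (d (k+1) * μ (k+1))) * (X k * X (k+1)) := by
        ring
      rw [h1, hsqrtprod _ _ (mul_pos (hdpos k) (hμpos k)).le (mul_pos (hdpos (k+1)) (hμpos (k+1))).le]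
      have h2 : d k * μ k * (d (k+1) * μ (k+1)) = (d (k+1) / c)^2 := by
        rw [hdsucc k]
        field_simp
      rw [h2, Real.sqrt_sq (div_pos (hdpos (k+1)) hc).le]
      have : c * (d (k+1) / c * (X k * X (k+1))) = d (k+1) * (X k * X (k+1)) := by
        field_simp
      rw [this]
    have hcorner : d 0 / ρ * (X 0 * X N) = c * (y 0 * y N) := by
      rw [hydef]
      dsimp only
      have h1 : Real.sqrt (d 0 * μ 0) * X 0 * (Real.sqrt (d N * μ N) * X N)
          = (Real.sqrt (d 0 * μ 0) * Real.sqrt (d N * μ N)) * (X 0 * X N) := by ring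
      rw [h1, hsqrtprod _ _ (mul_pos (hdpos 0) (hμpos 0)).le (mul_pos (hdpos N) (hμpos N)).le]
      have h2 : d 0 * μ 0 * (d N * μ N) = (c^N * P)^2 := by
        rw [hd0, hμN, mul_one, one_mul, hdN, mul_pow, ← pow_mul, Nat.mul_comm N 2]
      rw [h2, Real.sqrt_sq (mul_pos (pow_pos hc N) hP).le]
      have h3 : c * (c^N * P * (X 0 * X N)) = (c^(N+1) * P) * (X 0 * X N) := by
        rw [pow_succ]
        ring
      rw [h3, hcn]
      have h4 : (ρ * P)⁻¹ * P = 1 / ρ := by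
        field_simp
      rw [h4, hd0]
    have hQ : (∑ k ∈ Finset.range (N+1), 2 * d k * μ k * (X k)^2)
        - 2 * (∑ k ∈ Finset.range N, d (k+1) * (X k * X (k+1)))
        + 2 * (d 0 / ρ) * (X 0 * X N)
        = 2 * (∑ k ∈ Finset.range (N+1), (y k)^2)
          - 2 * c * ((∑ k ∈ Finset.range N, y k * y (k+1)) - y 0 * y N) := by
      rw [Finset.sum_congr rfl fun k _ => hy2 k,
        Finset.sum_congr rfl fun k _ => hcross k]
      rw [← Finset.mul_sum, ← Finset.mul_sum]
      have := hcorner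
      rw [mul_sub]
      linarith [hcorner]
    rw [hQ]
    -- apply the cyclic bound
    have hcyc := cyc_cos_bound (N+1) (by omega) y
    simp only [Nat.add_sub_cancel] at hcyc
    have hSpos : 0 < ∑ k ∈ Finset.range (N+1), (y k)^2 := by
      obtain ⟨i, hi⟩ := Function.ne_iff.mp hx
      have hyi : y i.val ≠ 0 := by
        rw [hydef]
        dsimp only
        apply mul_ne_zero
        · have : 0 < Real.sqrt (d i.val * μ i.val) := Real.sqrt_pos.mpr (mul_pos (hdpos _) (hμpos _))
          exact this.ne'
        · rw [← hXx i]
          simpa using hi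
      have h1 : 0 < (y i.val)^2 :=
        lt_of_le_of_ne (sq_nonneg _) (Ne.symm (pow_ne_zero 2 hyi))
      have h2 : (y i.val)^2 ≤ ∑ k ∈ Finset.range (N+1), (y k)^2 :=
        Finset.single_le_sum (fun k _ => sq_nonneg (y k))
          (Finset.mem_range.mpr i.isLt)
      linarith
    have hkey : 2 * c * ((∑ k ∈ Finset.range N, y k * y (k+1)) - y 0 * y N)
        ≤ 2 * c * (Real.cos (Real.pi / (N+1)) * ∑ k ∈ Finset.range (N+1), (y k)^2) := by
      apply mul_le_mul_of_nonneg_left _ (by linarith : (0:ℝ) ≤ 2 * c)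
      convert hcyc using 3
      · rfl
      push_cast
      ring
    have hfin : 0 < 2 * ((1 - c * Real.cos (Real.pi / (N+1)))
        * ∑ k ∈ Finset.range (N+1), (y k)^2) := by
      apply mul_pos (by norm_num)
      exact mul_pos (by linarith) hSpos
    nlinarith [hkey, hfin]
end
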